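/- arXiv:2312.06248 — 15 statements merged into one kernel-verified Lean document; each statement's English description precedes it below -/
import Mathlib

section
/- The only integer contained in F is 1; that is, φ(0) = 1, and for every p : ℕ, if the real number φ(p) is an integer then p = 0 (hence φ(p) = 1). -/
theorem stmt_0 (a b : ℕ) (ha : 1 < a) (hab : a < b) (hcop : Nat.Coprime a b)
    (d : ℕ → ℕ) (hd : ∀ p : ℕ, IsLeast {k : ℕ | b ^ p ≤ a ^ (p + k)} (d p))
    (φ : ℕ → ℝ) (hφ : ∀ p : ℕ, φ p = (a : ℝ) ^ (p + d p) / (b : ℝ) ^ p)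
    (F : Set ℝ) (hF : F = Set.range φ) :
    φ 0 = 1 ∧ ∀ p : ℕ, (∃ n : ℤ, φ p = (n : ℝ)) → p = 0 ∧ φ p = 1 := by
  have hd0 : d 0 = 0 := Nat.le_zero.mp ((hd 0).2 (by simp))
  have hφ0 : φ 0 = 1 := by rw [hφ 0, hd0]; norm_num
  refine ⟨hφ0, fun p ⟨n, hn⟩ => ?_⟩
  have hb0 : (0:ℝ) < (b:ℝ) := by exact_mod_cast Nat.zero_lt_of_lt hab
  have hbpos : (0 : ℝ) < (b : ℝ) ^ p := by positivity
  have heq : ((a : ℝ)) ^ (p + d p) = (n : ℝ) * (b : ℝ) ^ p := by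
    have := hφ p
    rw [hn] at this
    field_simp at this
    linarith [this]
  have hnpos : (0 : ℝ) < (n : ℝ) := by
    have hapos : (0 : ℝ) < (a : ℝ) ^ (p + d p) := by positivity
    nlinarith
  obtain ⟨m, hm⟩ : ∃ m : ℕ, n = (m : ℤ) :=
    ⟨n.toNat, (Int.toNat_of_nonneg (by exact_mod_cast hnpos.le)).symm⟩
  have heqN : a ^ (p + d p) = m * b ^ p := by
    have : ((a ^ (p + d p) : ℕ) : ℝ) = ((m * b ^ p : ℕ) : ℝ) := by
      push_cast
      rw [heq, hm]; push_cast; ring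
    exact_mod_cast this
  have hdvd : b ^ p ∣ a ^ (p + d p) := ⟨m, by rw [heqN, Nat.mul_comm]⟩
  have hcop2 : Nat.Coprime (b ^ p) (a ^ (p + d p)) := Nat.Coprime.pow _ _ hcop.symm
  have hb1 : b ^ p = 1 := hcop2.eq_one_of_dvd hdvd
  have hp0 : p = 0 := by
    by_contra h
    have : 2 ≤ b := by omega
    have := Nat.one_lt_pow h this
    omega
  exact ⟨hp0, hp0 ▸ hφ0⟩
end

section
/- For all natural numbers p₁ and p₂, φ(p₁) = φ(p₂) if and only if p₁ = p₂; in other words, the map φ : ℕ → ℝ is injective. -/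
theorem stmt_1 (a b : ℕ) (ha : 1 < a) (hab : a < b) (hcop : Nat.Coprime a b)
    (d : ℕ → ℕ) (hd : ∀ p : ℕ, IsLeast {k : ℕ | b ^ p ≤ a ^ (p + k)} (d p))
    (φ : ℕ → ℝ) (hφ : ∀ p : ℕ, φ p = (a : ℝ) ^ (p + d p) / (b : ℝ) ^ p) :
    (∀ p₁ p₂ : ℕ, φ p₁ = φ p₂ ↔ p₁ = p₂) ∧ Function.Injective φ := by
  have hb : 1 < b := lt_trans ha hab
  have hbpos : (0:ℝ) < (b:ℝ) := by exact_mod_cast Nat.lt_of_lt_of_le Nat.zero_lt_one hb.le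
  have hinj : Function.Injective φ := by
    intro p₁ p₂ h
    rw [hφ, hφ] at h
    have h' : (a:ℝ) ^ (p₁ + d p₁) * (b:ℝ) ^ p₂ = (a:ℝ) ^ (p₂ + d p₂) * (b:ℝ) ^ p₁ := by
      field_simp at h
      linarith
    have hn : a ^ (p₁ + d p₁) * b ^ p₂ = a ^ (p₂ + d p₂) * b ^ p₁ := by
      exact_mod_cast h'
    have hc1 : Nat.Coprime (b ^ p₂) (a ^ (p₂ + d p₂)) := hcop.symm.pow _ _
    have hc2 : Nat.Coprime (b ^ p₁) (a ^ (p₁ + d p₁)) := hcop.symm.pow _ _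
    have hdvd1 : b ^ p₂ ∣ b ^ p₁ := by
      have : b ^ p₂ ∣ a ^ (p₂ + d p₂) * b ^ p₁ := ⟨a ^ (p₁ + d p₁), by rw [← hn]; ring⟩
      exact hc1.dvd_of_dvd_mul_left this
    have hdvd2 : b ^ p₁ ∣ b ^ p₂ := by
      have : b ^ p₁ ∣ a ^ (p₁ + d p₁) * b ^ p₂ := ⟨a ^ (p₂ + d p₂), by rw [hn]; ring⟩
      exact hc2.dvd_of_dvd_mul_left this
    have hpow : b ^ p₁ = b ^ p₂ := Nat.dvd_antisymm hdvd2 hdvd1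
    exact Nat.pow_right_injective hb hpow
  exact ⟨fun p₁ p₂ => ⟨fun h => hinj h, fun h => by rw [h]⟩, hinj⟩
end

section
/- The map φ : ℕ → F is a bijection from ℕ onto F; in particular, F is a countably infinite set. -/
theorem stmt_2 (a b : ℕ) (ha : 1 < a) (hab : a < b) (hcop : Nat.Coprime a b)
    (d : ℕ → ℕ) (hd : ∀ p : ℕ, IsLeast {k : ℕ | b ^ p ≤ a ^ (p + k)} (d p))
    (φ : ℕ → ℝ) (hφ : ∀ p : ℕ, φ p = (a : ℝ) ^ (p + d p) / (b : ℝ) ^ p)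
    (F : Set ℝ) (hF : F = Set.range φ) :
    Set.BijOn φ Set.univ F ∧ F.Countable ∧ F.Infinite := by
  have hb : 1 < b := ha.trans hab
  have hbpos : ∀ p : ℕ, (0:ℝ) < (b:ℝ) ^ p := fun p =>
    pow_pos (by exact_mod_cast Nat.lt_of_lt_of_le Nat.zero_lt_one hb.le) p
  -- key: from the natural-number equation, p ≤ q implies p = q
  have key : ∀ p q : ℕ, p ≤ q → a ^ (p + d p) * b ^ q = a ^ (q + d q) * b ^ p → p = q := by
    intro p q hpq h
    have hbq : b ^ q = b ^ (q - p) * b ^ p := by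
      rw [← pow_add]; congr 1; omega
    rw [hbq, ← mul_assoc] at h
    have hcancel : a ^ (p + d p) * b ^ (q - p) = a ^ (q + d q) :=
      Nat.eq_of_mul_eq_mul_right (pow_pos (Nat.lt_of_lt_of_le Nat.zero_lt_one hb.le) p) h
    have hdvd : b ^ (q - p) ∣ a ^ (q + d q) := ⟨a ^ (p + d p), by rw [← hcancel]; ring⟩
    have hco : Nat.Coprime (b ^ (q - p)) (a ^ (q + d q)) :=
      Nat.Coprime.pow _ _ hcop.symm
    have := Nat.eq_one_of_dvd_coprimes hco (dvd_refl _) hdvd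
    have : q - p = 0 := by
      by_contra hne
      have : b ^ (q - p) ≥ b ^ 1 := Nat.pow_le_pow_right (Nat.le_of_lt hb) (by omega)
      simp at this; omega
    omega
  have hinj : Function.Injective φ := by
    intro p q h
    rw [hφ p, hφ q, div_eq_div_iff (hbpos p).ne' (hbpos q).ne'] at h
    have h' : a ^ (p + d p) * b ^ q = a ^ (q + d q) * b ^ p := by exact_mod_cast h
    rcases le_total p q with hpq | hqp
    · exact key p q hpq h'
    · exact (key q p hqp h'.symm).symm
  refine ⟨⟨fun x _ => by rw [hF]; exact Set.mem_range_self x,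
      hinj.injOn, ?_⟩, ?_, ?_⟩
  · rw [hF]; rintro y ⟨p, rfl⟩; exact ⟨p, Set.mem_univ p, rfl⟩
  · rw [hF]; exact Set.countable_range φ
  · rw [hF]; exact Set.infinite_range_of_injective hinj
end

section
/- For all natural numbers p₁ and p₂: if φ(p₁) · φ(p₂) < a then φ(p₁ + p₂) = φ(p₁) · φ(p₂), while if a ≤ φ(p₁) · φ(p₂) then φ(p₁ + p₂) = (φ(p₁) · φ(p₂)) / a. -/
lemma aux_upper (a b : ℕ) (ha : 1 < a) (hab : a < b)
    (d : ℕ → ℕ) (hd : ∀ p : ℕ, IsLeast {k : ℕ | b ^ p ≤ a ^ (p + k)} (d p))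
    (p : ℕ) : a ^ (p + d p) < a * b ^ p := by
  rcases h : d p with _ | k
  · have h1 : a ^ p ≤ b ^ p := Nat.pow_le_pow_left hab.le p
    have h2 : b ^ p < a * b ^ p := by
      have : 0 < b ^ p := Nat.pow_pos (by omega)
      calc b ^ p = 1 * b ^ p := (one_mul _).symm
        _ < a * b ^ p := (Nat.mul_lt_mul_right this).mpr ha
    calc a ^ (p + 0) = a ^ p := by rw [Nat.add_zero]
      _ ≤ b ^ p := h1
      _ < a * b ^ p := h2
  · have hk : ¬ b ^ p ≤ a ^ (p + k) := by
      intro hle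
      have := (hd p).2 hle
      omega
    push_neg at hk
    calc a ^ (p + (k + 1)) = a * a ^ (p + k) := by ring
      _ < a * b ^ p := (Nat.mul_lt_mul_left (show 0 < a by omega)).mpr hk

theorem stmt_4 (a b : ℕ) (ha : 1 < a) (hab : a < b) (hcop : Nat.Coprime a b)
    (d : ℕ → ℕ) (hd : ∀ p : ℕ, IsLeast {k : ℕ | b ^ p ≤ a ^ (p + k)} (d p))
    (φ : ℕ → ℝ) (hφ : ∀ p : ℕ, φ p = (a : ℝ) ^ (p + d p) / (b : ℝ) ^ p) :
    ∀ p₁ p₂ : ℕ,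
      (φ p₁ * φ p₂ < a → φ (p₁ + p₂) = φ p₁ * φ p₂) ∧
      ((a : ℝ) ≤ φ p₁ * φ p₂ → φ (p₁ + p₂) = (φ p₁ * φ p₂) / a) := by
  intro p₁ p₂
  have ha0 : (0:ℝ) < a := by positivity
  have hb0R : (0:ℝ) < b := by
    have : 0 < b := by omega
    positivity
  set s := p₁ + p₂ with hs
  set D := d p₁ + d p₂ with hD
  have hbs : (0:ℝ) < (b:ℝ) ^ s := by positivity
  -- product formula
  have hprod : φ p₁ * φ p₂ = (a:ℝ) ^ (s + D) / (b:ℝ) ^ s := by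
    rw [hφ p₁, hφ p₂, div_mul_div_comm, ← pow_add, ← pow_add]
    congr 2
    omega
  have h1 := (hd p₁).1
  have h2 := (hd p₂).1
  have hsmem := (hd s).1
  have hsmin := (hd s).2
  simp only [Set.mem_setOf_eq] at h1 h2 hsmem
  -- b^s ≤ a^(s+D) in ℕ
  have hbase : b ^ s ≤ a ^ (s + D) := by
    calc b ^ s = b ^ p₁ * b ^ p₂ := by rw [hs, pow_add]
      _ ≤ a ^ (p₁ + d p₁) * a ^ (p₂ + d p₂) := Nat.mul_le_mul h1 h2
      _ = a ^ (s + D) := by rw [← pow_add]; congr 1; omega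
  have hup1 := aux_upper a b ha hab d hd p₁
  have hup2 := aux_upper a b ha hab d hd p₂
  -- a^(s+D) < a^2 * b^s in ℕ
  have hsq : a ^ (s + D) < a ^ 2 * b ^ s := by
    calc a ^ (s + D) = a ^ (p₁ + d p₁) * a ^ (p₂ + d p₂) := by
          rw [← pow_add]; congr 1; omega
      _ < (a * b ^ p₁) * (a * b ^ p₂) := by
          exact Nat.mul_lt_mul'' hup1 hup2
      _ = a ^ 2 * b ^ s := by rw [hs, pow_add]; ring
  constructor
  · -- case product < a
    intro hlt
    rw [hprod] at hlt
    have hltN : (a:ℝ) ^ (s + D) < (a:ℝ) * (b:ℝ) ^ s := by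
      rwa [div_lt_iff₀ hbs] at hlt
    have hltNat : a ^ (s + D) < a * b ^ s := by
      have := hltN
      push_cast at this ⊢
      exact_mod_cast this
    have hle : d s ≤ D := hsmin hbase
    have hge : D ≤ d s := by
      by_contra hcon
      push_neg at hcon
      have hstep : a * b ^ s ≤ a ^ (s + D) := by
        calc a * b ^ s ≤ a * a ^ (s + d s) := Nat.mul_le_mul_left a hsmem
          _ = a ^ (s + d s + 1) := by ring
          _ ≤ a ^ (s + D) := Nat.pow_le_pow_right (by omega) (by omega)
      omega
    have hds : d s = D := le_antisymm hle hge
    rw [hφ s, hds, hprod]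
  · -- case a ≤ product
    intro hge
    rw [hprod] at hge
    have hgeR : (a:ℝ) * (b:ℝ) ^ s ≤ (a:ℝ) ^ (s + D) := by
      rwa [le_div_iff₀ hbs] at hge
    have hgeNat : a * b ^ s ≤ a ^ (s + D) := by exact_mod_cast hgeR
    have hD1 : 1 ≤ D := by
      by_contra hcon
      push_neg at hcon
      interval_cases D
      have h1' : a ^ (s + 0) ≤ b ^ s := by
        rw [Nat.add_zero]; exact Nat.pow_le_pow_left hab.le s
      have hbpos : 0 < b ^ s := Nat.pow_pos (by omega)
      nlinarith [hgeNat, h1']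
    -- b^s ≤ a^(s + (D-1))
    have hmem : b ^ s ≤ a ^ (s + (D - 1)) := by
      have heq : a * a ^ (s + (D - 1)) = a ^ (s + D) := by
        rw [← pow_succ']
        congr 1; omega
      have := hgeNat
      rw [← heq] at this
      exact Nat.le_of_mul_le_mul_left this (by omega)
    have hle : d s ≤ D - 1 := hsmin hmem
    have hge2 : D - 1 ≤ d s := by
      by_contra hcon
      push_neg at hcon
      have : a ^ 2 * b ^ s ≤ a ^ (s + D) := by
        calc a ^ 2 * b ^ s ≤ a ^ 2 * a ^ (s + d s) :=
              Nat.mul_le_mul_left _ hsmem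
          _ = a ^ (s + d s + 2) := by ring
          _ ≤ a ^ (s + D) := Nat.pow_le_pow_right (by omega) (by omega)
      omega
    have hds : d s = D - 1 := le_antisymm hle hge2
    rw [hφ s, hds, hprod]
    have hpow : (a:ℝ) ^ (s + D) = (a:ℝ) ^ (s + (D - 1)) * a := by
      rw [← pow_succ]; congr 1; omega
    rw [hpow]
    field_simp
end

section
/- For all natural numbers p₁ and p₂: if φ(p₁) · φ(p₂) < a then d(p₁ + p₂) = d(p₁) + d(p₂), while if a ≤ φ(p₁) · φ(p₂) then d(p₁ + p₂) = d(p₁) + d(p₂) − 1. -/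
theorem stmt_5 (a b : ℕ) (ha : 1 < a) (hab : a < b) (hcop : Nat.Coprime a b)
    (d : ℕ → ℕ) (hd : ∀ p : ℕ, IsLeast {k : ℕ | b ^ p ≤ a ^ (p + k)} (d p))
    (φ : ℕ → ℝ) (hφ : ∀ p : ℕ, φ p = (a : ℝ) ^ (p + d p) / (b : ℝ) ^ p) :
    ∀ p₁ p₂ : ℕ,
      (φ p₁ * φ p₂ < a → d (p₁ + p₂) = d p₁ + d p₂) ∧
      ((a : ℝ) ≤ φ p₁ * φ p₂ → (d (p₁ + p₂) : ℤ) = (d p₁ : ℤ) + (d p₂ : ℤ) - 1) := by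
  have hb : 1 < b := ha.trans hab
  have hbp : ∀ p : ℕ, 0 < b ^ p := fun p => pow_pos (by omega) p
  -- upper bound: a^(p + d p) < a * b^p
  have ub : ∀ p, a ^ (p + d p) < a * b ^ p := by
    intro p
    rcases Nat.eq_zero_or_pos (d p) with h0 | hpos
    · rw [h0, Nat.add_zero]
      calc a ^ p ≤ b ^ p := Nat.pow_le_pow_left hab.le p
        _ < a * b ^ p := by nlinarith [hbp p]
    · obtain ⟨k, hk⟩ : ∃ k, d p = k + 1 := ⟨d p - 1, by omega⟩
      have hnot : ¬ b ^ p ≤ a ^ (p + k) := fun h => by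
        have := (hd p).2 h; omega
      push_neg at hnot
      calc a ^ (p + d p) = a * a ^ (p + k) := by rw [hk, ← pow_succ']; ring_nf
        _ < a * b ^ p := by
            exact mul_lt_mul_of_pos_left hnot (by omega)
  intro p₁ p₂
  set s := p₁ + p₂ with hs
  have lb1 := (hd p₁).1
  have lb2 := (hd p₂).1
  have lbs := (hd s).1
  simp only [Set.mem_setOf_eq] at lb1 lb2 lbs
  have h1 : b ^ s ≤ a ^ (s + (d p₁ + d p₂)) := by
    calc b ^ s = b ^ p₁ * b ^ p₂ := by rw [hs, pow_add]
      _ ≤ a ^ (p₁ + d p₁) * a ^ (p₂ + d p₂) := Nat.mul_le_mul lb1 lb2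
      _ = a ^ (s + (d p₁ + d p₂)) := by rw [← pow_add, hs]; ring_nf
  have hDle : d s ≤ d p₁ + d p₂ := (hd s).2 h1
  -- convert φ p₁ * φ p₂ comparisons with a to ℕ
  have key : φ p₁ * φ p₂ * (b : ℝ) ^ s = (a : ℝ) ^ (s + (d p₁ + d p₂)) := by
    rw [hφ, hφ, hs]
    have hb1 : ((b : ℝ)) ^ p₁ ≠ 0 := by positivity
    have hb2 : ((b : ℝ)) ^ p₂ ≠ 0 := by positivity
    field_simp
    ring
  constructor
  · intro hlt
    have hnat : a ^ (s + (d p₁ + d p₂)) < a * b ^ s := by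
      have hbr : (0:ℝ) < (b:ℝ) ^ s := by positivity
      have : (a:ℝ) ^ (s + (d p₁ + d p₂)) < (a:ℝ) * (b:ℝ) ^ s := by
        rw [← key]; nlinarith
      exact_mod_cast this
    by_contra hne
    have hDlt : d s < d p₁ + d p₂ := lt_of_le_of_ne hDle hne
    have h2 : b ^ s ≤ a ^ (s + (d p₁ + d p₂ - 1)) :=
      lbs.trans (Nat.pow_le_pow_right (by omega) (by omega))
    have h3 : a * b ^ s ≤ a ^ (s + (d p₁ + d p₂)) := by
      calc a * b ^ s ≤ a * a ^ (s + (d p₁ + d p₂ - 1)) := Nat.mul_le_mul_left a h2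
        _ = a ^ (s + (d p₁ + d p₂)) := by rw [← pow_succ']; congr 1; omega
    omega
  · intro hge
    have hnat : a * b ^ s ≤ a ^ (s + (d p₁ + d p₂)) := by
      have hbr : (0:ℝ) < (b:ℝ) ^ s := by positivity
      have : (a:ℝ) * (b:ℝ) ^ s ≤ (a:ℝ) ^ (s + (d p₁ + d p₂)) := by
        rw [← key]; nlinarith
      exact_mod_cast this
    have hd12 : 1 ≤ d p₁ + d p₂ := by
      by_contra h
      push_neg at h
      have h0 : d p₁ + d p₂ = 0 := by omega
      rw [h0, add_zero] at hnat
      have has : a ^ s ≤ b ^ s := Nat.pow_le_pow_left hab.le s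
      nlinarith [hbp s]
    have h2 : b ^ s ≤ a ^ (s + (d p₁ + d p₂ - 1)) := by
      have : a * b ^ s ≤ a * a ^ (s + (d p₁ + d p₂ - 1)) := by
        calc a * b ^ s ≤ a ^ (s + (d p₁ + d p₂)) := hnat
          _ = a * a ^ (s + (d p₁ + d p₂ - 1)) := by rw [← pow_succ']; congr 1; omega
      exact Nat.le_of_mul_le_mul_left this (by omega)
    have hle : d s ≤ d p₁ + d p₂ - 1 := (hd s).2 h2
    have hge2 : d p₁ + d p₂ - 1 ≤ d s := by
      by_contra h
      push_neg at h
      have h22 : 2 ≤ d p₁ + d p₂ := by omega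
      have h3 : b ^ s ≤ a ^ (s + (d p₁ + d p₂ - 2)) :=
        lbs.trans (Nat.pow_le_pow_right (by omega) (by omega))
      have h4 : a ^ (s + (d p₁ + d p₂)) < a * a * b ^ s := by
        calc a ^ (s + (d p₁ + d p₂)) = a ^ (p₁ + d p₁) * a ^ (p₂ + d p₂) := by
              rw [← pow_add, hs]; ring_nf
          _ < (a * b ^ p₁) * (a * b ^ p₂) := by
              exact Nat.mul_lt_mul_of_lt_of_le (ub p₁) (ub p₂).le (by positivity)
          _ = a * a * b ^ s := by rw [hs, pow_add]; ring
      have h5 : a * a * b ^ s ≤ a ^ (s + (d p₁ + d p₂)) := by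
        calc a * a * b ^ s ≤ a * a * a ^ (s + (d p₁ + d p₂ - 2)) := by
              exact Nat.mul_le_mul_left _ h3
          _ = a ^ (s + (d p₁ + d p₂)) := by
              rw [mul_assoc, ← pow_succ', ← pow_succ']; congr 1; omega
      omega
    omega
end

section
/- Define a binary operation ⋆ on real numbers by x ⋆ y = x·y if x·y < a and x ⋆ y = x·y/a if a ≤ x·y. Then ⋆ restricted to F is an internal law on F (for f₁, f₂ ∈ F one has f₁ ⋆ f₂ ∈ F), it is associative and commutative on F, the element 1 ∈ F is a two-sided identity for ⋆ on F, and φ(p₁ + p₂) = φ(p₁) ⋆ φ(p₂) for all p₁, p₂ : ℕ; hence (F, ⋆, 1) is a commutative monoid and φ : (ℕ, +, 0) → (F, ⋆, 1) is a monoid isomorphism. -/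
theorem stmt_6 (a b : ℕ) (ha : 1 < a) (hab : a < b) (hcop : Nat.Coprime a b)
    (d : ℕ → ℕ) (hd : ∀ p : ℕ, IsLeast {k : ℕ | b ^ p ≤ a ^ (p + k)} (d p))
    (φ : ℕ → ℝ) (hφ : ∀ p : ℕ, φ p = (a : ℝ) ^ (p + d p) / (b : ℝ) ^ p)
    (F : Set ℝ) (hF : F = Set.range φ)
    (star : ℝ → ℝ → ℝ)
    (hstar : ∀ x y : ℝ, star x y = if x * y < a then x * y else x * y / a) :
    (∀ f₁ ∈ F, ∀ f₂ ∈ F, star f₁ f₂ ∈ F) ∧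
    (∀ f₁ ∈ F, ∀ f₂ ∈ F, ∀ f₃ ∈ F, star (star f₁ f₂) f₃ = star f₁ (star f₂ f₃)) ∧
    (∀ f₁ ∈ F, ∀ f₂ ∈ F, star f₁ f₂ = star f₂ f₁) ∧
    (1 : ℝ) ∈ F ∧
    (∀ f ∈ F, star f 1 = f ∧ star 1 f = f) ∧
    (∀ p₁ p₂ : ℕ, φ (p₁ + p₂) = star (φ p₁) (φ p₂)) ∧
    φ 0 = 1 ∧ Function.Injective φ ∧ Set.range φ = F := by
  have hb1 : 1 < b := lt_trans ha hab
  have haR : (1:ℝ) < (a:ℝ) := by exact_mod_cast ha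
  have hbpR : ∀ p : ℕ, (0:ℝ) < (b:ℝ)^p := fun p => pow_pos (by positivity) p
  have hapR : ∀ n : ℕ, (0:ℝ) < (a:ℝ)^n := fun n => pow_pos (by positivity) n
  have hmem : ∀ p, b^p ≤ a^(p + d p) := fun p => (hd p).1
  have hmin : ∀ p k, k < d p → a^(p+k) < b^p := by
    intro p k hk
    by_contra h
    push_neg at h
    exact absurd ((hd p).2 h) (by omega)
  -- 1 ≤ φ p
  have hφ1 : ∀ p, 1 ≤ φ p := by
    intro p
    rw [hφ p, le_div_iff₀ (hbpR p), one_mul]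
    exact_mod_cast hmem p
  -- φ p < a
  have hφlt : ∀ p, φ p < a := by
    intro p
    rw [hφ p, div_lt_iff₀ (hbpR p)]
    have key : a^(p + d p) < a * b^p := by
      rcases Nat.eq_zero_or_pos (d p) with h | h
      · rw [h, Nat.add_zero]
        calc a^p ≤ b^p := Nat.pow_le_pow_left (le_of_lt hab) p
          _ < a * b^p := by
            have : 0 < b^p := Nat.pow_pos (by omega)
            calc b^p = 1 * b^p := (one_mul _).symm
              _ < a * b^p := by exact Nat.mul_lt_mul_of_lt_of_le ha (le_refl _) this
      · have h1 : a^(p + (d p - 1)) < b^p := hmin p (d p - 1) (by omega)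
        have h2 : a^(p + d p) = a * a^(p + (d p - 1)) := by
          rw [← pow_succ']; congr 1; omega
        rw [h2]
        exact Nat.mul_lt_mul_of_le_of_lt (le_refl a) h1 (by omega)
    exact_mod_cast key
  have hφpos : ∀ p, 0 < φ p := fun p => lt_of_lt_of_le one_pos (hφ1 p)
  have d0 : d 0 = 0 := Nat.le_zero.mp ((hd 0).2 (by simp))
  have hφ0 : φ 0 = 1 := by rw [hφ 0, d0]; norm_num
  -- product formula
  have hprod : ∀ p₁ p₂ : ℕ, φ p₁ * φ p₂ =
      (a:ℝ)^((p₁+p₂) + (d p₁ + d p₂)) / (b:ℝ)^(p₁+p₂) := by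
    intro p₁ p₂
    rw [hφ, hφ, div_mul_div_comm, ← pow_add, ← pow_add,
      show (p₁ + d p₁) + (p₂ + d p₂) = (p₁+p₂) + (d p₁ + d p₂) from by omega]
  have hDin : ∀ p₁ p₂ : ℕ, b^(p₁+p₂) ≤ a^((p₁+p₂) + (d p₁ + d p₂)) := by
    intro p₁ p₂
    calc b^(p₁+p₂) = b^p₁ * b^p₂ := pow_add b p₁ p₂
      _ ≤ a^(p₁ + d p₁) * a^(p₂ + d p₂) := Nat.mul_le_mul (hmem p₁) (hmem p₂)
      _ = a^((p₁+p₂) + (d p₁ + d p₂)) := by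
          rw [← pow_add]; congr 1; omega
  -- key homomorphism property
  have key : ∀ p₁ p₂ : ℕ, φ (p₁ + p₂) = star (φ p₁) (φ p₂) := by
    intro p₁ p₂
    set P := p₁ + p₂ with hP
    set D := d p₁ + d p₂ with hDdef
    rw [hstar, hprod p₁ p₂]
    by_cases hc : (a:ℝ)^(P + D) / (b:ℝ)^P < a
    · rw [if_pos hc]
      -- show d P = D
      have hlt : a^(P+D) < a * b^P := by
        rw [div_lt_iff₀ (hbpR P)] at hc
        exact_mod_cast hc
      have hdP : d P = D := by
        refine le_antisymm ((hd P).2 (hDin p₁ p₂)) ?_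
        by_contra h
        push_neg at h
        have hD1 : 1 ≤ D := by omega
        have h3 : a^(P + (D-1)) < b^P := by
          have h4 : a * a^(P + (D-1)) < a * b^P := by
            calc a * a^(P + (D-1)) = a^(P+D) := by rw [← pow_succ']; congr 1; omega
              _ < a * b^P := hlt
          exact Nat.lt_of_mul_lt_mul_left h4
        have h5 : a^(P + d P) ≤ a^(P + (D-1)) :=
          Nat.pow_le_pow_right (by omega) (by omega)
        exact absurd (hmem P) (by omega)
      rw [hφ P, hdP]
    · rw [if_neg hc]
      push_neg at hc
      have hge : a * b^P ≤ a^(P+D) := by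
        rw [le_div_iff₀ (hbpR P)] at hc
        exact_mod_cast hc
      have hD1 : 1 ≤ D := by
        by_contra h
        have hD0 : D = 0 := by omega
        rw [hD0, Nat.add_zero] at hge
        have : a^P ≤ b^P := Nat.pow_le_pow_left (le_of_lt hab) P
        have hb0 : 0 < b^P := Nat.pow_pos (by omega)
        nlinarith
      have hdP : d P = D - 1 := by
        have hin : b^P ≤ a^(P + (D-1)) := by
          have h4 : a * b^P ≤ a * a^(P + (D-1)) := by
            calc a * b^P ≤ a^(P+D) := hge
              _ = a * a^(P + (D-1)) := by rw [← pow_succ']; congr 1; omega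
          exact Nat.le_of_mul_le_mul_left h4 (by omega)
        refine le_antisymm ((hd P).2 hin) ?_
        by_contra h
        push_neg at h
        have hD2 : 2 ≤ D := by omega
        -- product < a^2
        have hlt2 : (a:ℝ)^(P+D) / (b:ℝ)^P < (a:ℝ)*(a:ℝ) := by
          rw [← hprod p₁ p₂]
          exact mul_lt_mul'' (hφlt p₁) (hφlt p₂) (le_of_lt (hφpos p₁)) (le_of_lt (hφpos p₂))
        have hlt3 : a^(P+D) < a * a * b^P := by
          rw [div_lt_iff₀ (hbpR P)] at hlt2
          exact_mod_cast hlt2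
        have h3 : a^(P + (D-2)) < b^P := by
          have h4 : (a*a) * a^(P + (D-2)) < (a*a) * b^P := by
            calc (a*a) * a^(P + (D-2)) = a^(P+D) := by
                  rw [mul_assoc, ← pow_succ', ← pow_succ']
                  congr 1; omega
              _ < a * a * b^P := hlt3
          exact Nat.lt_of_mul_lt_mul_left h4
        have h5 : a^(P + d P) ≤ a^(P + (D-2)) :=
          Nat.pow_le_pow_right (by omega) (by omega)
        exact absurd (hmem P) (by omega)
      rw [hφ P, hdP]
      rw [eq_div_iff (ne_of_gt (by positivity : (0:ℝ) < (a:ℝ))), div_mul_eq_mul_div,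
        div_eq_div_iff (ne_of_gt (hbpR P)) (ne_of_gt (hbpR P))]
      have : (a:ℝ)^(P + (D-1)) * (a:ℝ) = (a:ℝ)^(P+D) := by
        rw [← pow_succ]; congr 1; omega
      rw [← this]
  -- injectivity
  have hinj : Function.Injective φ := by
    intro p q hpq
    rw [hφ p, hφ q, div_eq_div_iff (ne_of_gt (hbpR p)) (ne_of_gt (hbpR q))] at hpq
    have hnat : a^(p + d p) * b^q = a^(q + d q) * b^p := by exact_mod_cast hpq
    have hcop1 : Nat.Coprime (b^p) (a^(p + d p)) := Nat.Coprime.pow _ _ hcop.symm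
    have hcop2 : Nat.Coprime (b^q) (a^(q + d q)) := Nat.Coprime.pow _ _ hcop.symm
    have hdvd1 : b^p ∣ b^q := by
      refine hcop1.dvd_of_dvd_mul_left ?_
      exact ⟨a^(q + d q), by linarith [hnat]⟩
    have hdvd2 : b^q ∣ b^p := by
      refine hcop2.dvd_of_dvd_mul_left ?_
      exact ⟨a^(p + d p), by linarith [hnat]⟩
    have : b^p = b^q := Nat.dvd_antisymm hdvd1 hdvd2
    exact Nat.pow_right_injective (by omega) this
  refine ⟨?_, ?_, ?_, ?_, ?_, key, hφ0, hinj, hF.symm⟩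
  · rintro f₁ hf₁ f₂ hf₂
    rw [hF] at *
    obtain ⟨p₁, rfl⟩ := hf₁
    obtain ⟨p₂, rfl⟩ := hf₂
    exact ⟨p₁ + p₂, (key p₁ p₂)⟩
  · rintro f₁ hf₁ f₂ hf₂ f₃ hf₃
    rw [hF] at *
    obtain ⟨p₁, rfl⟩ := hf₁
    obtain ⟨p₂, rfl⟩ := hf₂
    obtain ⟨p₃, rfl⟩ := hf₃
    rw [← key p₁ p₂, ← key p₂ p₃, ← key (p₁+p₂) p₃, ← key p₁ (p₂+p₃), Nat.add_assoc]
  · intro f₁ _ f₂ _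
    rw [hstar, hstar, mul_comm]
  · rw [hF]; exact ⟨0, hφ0⟩
  · intro f hf
    rw [hF] at hf
    obtain ⟨p, rfl⟩ := hf
    constructor
    · rw [hstar, mul_one, if_pos (hφlt p)]
    · rw [hstar, one_mul, if_pos (hφlt p)]
end

section
/- For every i : ℕ, both u i and v i belong to F. -/
theorem stmt_7 (a b : ℕ) (ha : 1 < a) (hab : a < b) (hcop : Nat.Coprime a b)
    (d : ℕ → ℕ) (hd : ∀ p : ℕ, IsLeast {k : ℕ | b ^ p ≤ a ^ (p + k)} (d p))
    (φ : ℕ → ℝ) (hφ : ∀ p : ℕ, φ p = (a : ℝ) ^ (p + d p) / (b : ℝ) ^ p)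
    (F : Set ℝ) (hF : F = Set.range φ)
    (u v : ℕ → ℝ) (hu0 : u 0 = φ 1) (hv0 : v 0 = φ 1)
    (huv : ∀ i : ℕ,
      (u i * v i < a → u (i + 1) = u i ∧ v (i + 1) = u i * v i) ∧
      ((a : ℝ) ≤ u i * v i → u (i + 1) = (u i * v i) / a ∧ v (i + 1) = v i)) :
    ∀ i : ℕ, u i ∈ F ∧ v i ∈ F := by
  have ha1 : (1:ℝ) < (a:ℝ) := by exact_mod_cast ha
  have ha0 : (0:ℝ) < a := lt_trans one_pos ha1
  have hb0 : (0:ℝ) < b := by exact_mod_cast (by omega : 0 < b)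
  have hbp : ∀ p:ℕ, (0:ℝ) < (b:ℝ)^p := fun p => pow_pos hb0 p
  have hlow : ∀ p, (b:ℝ)^p ≤ (a:ℝ)^(p + d p) := by
    intro p; exact_mod_cast (hd p).1
  have hhighN : ∀ p, a^(p + d p) < a * b^p := by
    intro p
    rcases Nat.eq_zero_or_pos (d p) with h0 | h1
    · rw [h0, Nat.add_zero]
      have h1 : a^p ≤ b^p := Nat.pow_le_pow_left (le_of_lt hab) p
      have h2 : 0 < b^p := pow_pos (by omega) p
      nlinarith
    · have hnm : ¬ (d p - 1) ∈ {k : ℕ | b ^ p ≤ a ^ (p + k)} := by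
        intro hmem
        have := (hd p).2 hmem
        omega
      simp only [Set.mem_setOf_eq, not_le] at hnm
      have heq : a ^ (p + d p) = a * a^(p + (d p - 1)) := by
        rw [← pow_succ']; congr 1; omega
      rw [heq]
      have h2 : 0 < a := by omega
      have h3 : 0 < b^p := pow_pos (by omega) p
      nlinarith
  have hhigh : ∀ p, (a:ℝ)^(p + d p) < a * (b:ℝ)^p := by
    intro p; exact_mod_cast hhighN p
  have hφlt : ∀ p, φ p < a := by
    intro p; rw [hφ, div_lt_iff₀ (hbp p)]
    calc (a:ℝ)^(p + d p) < a * b^p := hhigh p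
      _ = a * b^p := rfl
  have key : ∀ p q : ℕ, ((φ p * φ q < a → φ p * φ q = φ (p+q)) ∧
      ((a:ℝ) ≤ φ p * φ q → φ p * φ q / a = φ (p+q))) := by
    intro p q
    have hprod : φ p * φ q = (a:ℝ)^(p + q + (d p + d q)) / (b:ℝ)^(p+q) := by
      rw [hφ, hφ, div_mul_div_comm, ← pow_add, ← pow_add]
      congr 2
      omega
    have hmemN : b^(p+q) ≤ a^(p + q + (d p + d q)) := by
      calc b^(p+q) = b^p * b^q := by rw [pow_add]
        _ ≤ a^(p + d p) * a^(q + d q) := Nat.mul_le_mul (hd p).1 (hd q).1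
        _ = a^(p+q+(d p + d q)) := by rw [← pow_add]; congr 1; omega
    have hle := (hd (p+q)).2 hmemN
    constructor
    · intro hlt
      have hltN : a^(p + q + (d p + d q)) < a * b^(p+q) := by
        have h2 : (a:ℝ)^(p + q + (d p + d q)) / (b:ℝ)^(p+q) < a := hprod ▸ hlt
        have := (div_lt_iff₀ (hbp (p+q))).1 h2
        exact_mod_cast this
      have heq : d (p+q) = d p + d q := by
        by_contra hne
        have h3 : a * b^(p+q) ≤ a^(p+q+(d p + d q)) := by
          calc a * b^(p+q) ≤ a * a^(p+q+d (p+q)) :=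
                Nat.mul_le_mul_left a (hd (p+q)).1
            _ = a^(p+q+d (p+q)+1) := by rw [pow_succ]; ring
            _ ≤ a^(p+q+(d p + d q)) := Nat.pow_le_pow_right (by omega) (by omega)
        omega
      rw [hprod, hφ, heq]
    · intro hge
      have hgeN : a * b^(p+q) ≤ a^(p + q + (d p + d q)) := by
        have h2 : (a:ℝ) ≤ (a:ℝ)^(p + q + (d p + d q)) / (b:ℝ)^(p+q) := hprod ▸ hge
        have := (le_div_iff₀ (hbp (p+q))).1 h2
        have : (a:ℝ) * (b:ℝ)^(p+q) ≤ (a:ℝ)^(p + q + (d p + d q)) := by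
          push_cast
          linarith
        exact_mod_cast this
      have hs1 : 1 ≤ d p + d q := by
        by_contra h0
        have : d p + d q = 0 := by omega
        rw [this, Nat.add_zero] at hgeN
        have h1 : a^(p+q) ≤ b^(p+q) := Nat.pow_le_pow_left (le_of_lt hab) _
        have h2 : 0 < b^(p+q) := pow_pos (by omega) _
        nlinarith
      -- b^(p+q) ≤ a^(p+q + (dp+dq-1))
      have hmem2 : b^(p+q) ≤ a^(p+q+(d p + d q - 1)) := by
        have h4 : a * b^(p+q) ≤ a * a^(p+q+(d p + d q - 1)) := by
          calc a * b^(p+q) ≤ a^(p + q + (d p + d q)) := hgeN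
            _ = a * a^(p+q+(d p + d q - 1)) := by
                rw [← pow_succ']; congr 1; omega
        exact Nat.le_of_mul_le_mul_left h4 (by omega)
      have hle2 := (hd (p+q)).2 hmem2
      have heq : d (p+q) = d p + d q - 1 := by
        by_contra hne
        -- then d(p+q) ≤ dp+dq-2, so a^2 * b^(p+q) ≤ a^(p+q+dp+dq)
        have h5 : a * (a * b^(p+q)) ≤ a^(p+q+(d p + d q)) := by
          calc a * (a * b^(p+q)) ≤ a * (a * a^(p+q+d (p+q))) :=
                Nat.mul_le_mul_left a (Nat.mul_le_mul_left a (hd (p+q)).1)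
            _ = a^(p+q+d (p+q)+1+1) := by rw [pow_succ, pow_succ]; ring
            _ ≤ a^(p+q+(d p + d q)) := Nat.pow_le_pow_right (by omega) (by omega)
        -- but φ p * φ q < a^2
        have h6 : (a:ℝ)^(p + q + (d p + d q)) < a * a * b^(p+q) := by
          have hp1 := hφlt p
          have hq1 := hφlt q
          have hφpos : (0:ℝ) < φ q := by
            rw [hφ]; positivity
          have hφppos : (0:ℝ) < φ p := by
            rw [hφ]; positivity
          have : φ p * φ q < a * a := by nlinarith
          rw [hprod, div_lt_iff₀ (hbp (p+q))] at this
          linarith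
        have h6N : a^(p + q + (d p + d q)) < a * (a * b^(p+q)) := by
          have : ((a:ℕ):ℝ) * (a * b^(p+q)) = (a:ℝ) * a * (b:ℝ)^(p+q) := by push_cast; ring
          exact_mod_cast this ▸ h6
        omega
      have hx : (a:ℝ)^(p+q+(d p + d q)) = (a:ℝ)^(p+q+(d p + d q - 1)) * a := by
        rw [← pow_succ]; congr 1; omega
      rw [hprod, hφ, heq, hx]
      field_simp
  have main : ∀ i, (∃ p, u i = φ p) ∧ (∃ q, v i = φ q) := by
    intro i
    induction i with
    | zero => exact ⟨⟨1, hu0⟩, ⟨1, hv0⟩⟩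
    | succ i ih =>
      obtain ⟨⟨p, hp⟩, ⟨q, hq⟩⟩ := ih
      rcases lt_or_ge (u i * v i) (a:ℝ) with h | h
      · obtain ⟨h1, h2⟩ := (huv i).1 h
        refine ⟨⟨p, h1 ▸ hp⟩, ⟨p+q, ?_⟩⟩
        rw [h2, hp, hq]
        exact (key p q).1 (by rw [← hp, ← hq]; exact h)
      · obtain ⟨h1, h2⟩ := (huv i).2 h
        refine ⟨⟨p+q, ?_⟩, ⟨q, h2 ▸ hq⟩⟩
        rw [h1, hp, hq]
        exact (key p q).2 (by rw [← hp, ← hq]; exact h)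
  intro i
  obtain ⟨⟨p, hp⟩, ⟨q, hq⟩⟩ := main i
  subst hF
  exact ⟨⟨p, hp.symm⟩, ⟨q, hq.symm⟩⟩
end

section
/- For every i : ℕ there exists a positive integer k such that u (i+k) ≠ u i and v (i+k) ≠ v i; that is, neither of the sequences u and v is eventually constant from any index on. -/
/-- The representation predicate: `x = a^s / b^m` with `s : ℤ` and `m ≥ 1`. -/
def stmt8Q (a b : ℕ) (x : ℝ) : Prop :=
  ∃ s : ℤ, ∃ m : ℕ, 1 ≤ m ∧ x = (a : ℝ) ^ s / (b : ℝ) ^ m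

lemma stmt8Q_mul (a b : ℕ) (ha : 1 < a) (hb : 1 < b) {x y : ℝ}
    (hx : stmt8Q a b x) (hy : stmt8Q a b y) : stmt8Q a b (x * y) := by
  have hA0 : (a : ℝ) ≠ 0 := by positivity
  have hB0 : (b : ℝ) ≠ 0 := by positivity
  obtain ⟨s, m, hm, rfl⟩ := hx
  obtain ⟨t, n, hn, rfl⟩ := hy
  refine ⟨s + t, m + n, by omega, ?_⟩
  rw [zpow_add₀ hA0, pow_add]
  rw [div_mul_div_comm]

lemma stmt8Q_div (a b : ℕ) (ha : 1 < a) (hb : 1 < b) {x : ℝ}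
    (hx : stmt8Q a b x) : stmt8Q a b (x / a) := by
  have hA0 : (a : ℝ) ≠ 0 := by positivity
  obtain ⟨s, m, hm, rfl⟩ := hx
  refine ⟨s - 1, m, hm, ?_⟩
  rw [zpow_sub₀ hA0, zpow_one, div_div, div_div]
  rw [mul_comm ((b:ℝ) ^ m) (a:ℝ)]

lemma stmt8Q_ne (a b : ℕ) (ha : 1 < a) (hb : 1 < b) (hcop : Nat.Coprime a b)
    {x : ℝ} (hx : stmt8Q a b x) : x ≠ (a : ℝ) := by
  have hA : (1 : ℝ) < a := by exact_mod_cast ha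
  have hB : (1 : ℝ) < b := by exact_mod_cast hb
  have hA0 : (a : ℝ) ≠ 0 := by positivity
  obtain ⟨s, m, hm, rfl⟩ := hx
  have hBpow : (1 : ℝ) < (b : ℝ) ^ m := one_lt_pow₀ hB (by omega)
  intro h
  have h1 : (a : ℝ) ^ s = (a : ℝ) * (b : ℝ) ^ m := by
    rw [div_eq_iff (by positivity)] at h
    linarith
  have h2 : (a : ℝ) ^ (s - 1) = (b : ℝ) ^ m := by
    rw [zpow_sub₀ hA0, zpow_one, h1]
    field_simp
  rcases le_or_gt 1 s with hs | hs
  · set t := (s - 1).toNat with ht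
    have h3 : (a : ℝ) ^ t = (b : ℝ) ^ m := by
      rw [← h2, ← zpow_natCast, ht, Int.toNat_of_nonneg (by omega)]
    have h4 : a ^ t = b ^ m := by exact_mod_cast h3
    have h5 : Nat.Coprime (a ^ t) (b ^ m) := Nat.Coprime.pow t m hcop
    rw [h4] at h5
    have h6 : b ^ m = 1 := Nat.Coprime.eq_one_of_dvd h5 dvd_rfl
    have h7 : 1 < b ^ m := Nat.one_lt_pow (by omega) hb
    omega
  · have : (a : ℝ) ^ (s - 1) < 1 := zpow_lt_one_of_neg₀ hA (by omega)
    rw [h2] at this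
    linarith

theorem stmt_8 (a b : ℕ) (ha : 1 < a) (hab : a < b) (hcop : Nat.Coprime a b)
    (d : ℕ → ℕ) (hd : ∀ p : ℕ, IsLeast {k : ℕ | b ^ p ≤ a ^ (p + k)} (d p))
    (φ : ℕ → ℝ) (hφ : ∀ p : ℕ, φ p = (a : ℝ) ^ (p + d p) / (b : ℝ) ^ p)
    (F : Set ℝ) (hF : F = Set.range φ)
    (u v : ℕ → ℝ) (hu0 : u 0 = φ 1) (hv0 : v 0 = φ 1)
    (huv : ∀ i : ℕ,
      (u i * v i < a → u (i + 1) = u i ∧ v (i + 1) = u i * v i) ∧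
      ((a : ℝ) ≤ u i * v i → u (i + 1) = (u i * v i) / a ∧ v (i + 1) = v i)) :
    ∀ i : ℕ, ∃ k : ℕ, 0 < k ∧ u (i + k) ≠ u i ∧ v (i + k) ≠ v i := by
  have hb : 1 < b := lt_trans ha hab
  have hA : (1 : ℝ) < a := by exact_mod_cast ha
  have hB : (1 : ℝ) < b := by exact_mod_cast hb
  have hA0 : (a : ℝ) ≠ 0 := by positivity
  have hApos : (0 : ℝ) < a := by linarith
  -- basic facts about φ 1
  have hd1 : b ≤ a ^ (1 + d 1) := by
    have := (hd 1).1
    simpa using this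
  have hd1pos : 1 ≤ d 1 := by
    by_contra h
    have hd0 : d 1 = 0 := by omega
    rw [hd0] at hd1
    simp at hd1
    omega
  have hd1lt : a ^ (d 1) < b := by
    by_contra h
    push_neg at h
    have hmem : (d 1 - 1) ∈ {k : ℕ | b ^ 1 ≤ a ^ (1 + k)} := by
      simp only [Set.mem_setOf_eq, pow_one]
      calc b ≤ a ^ (d 1) := h
        _ ≤ a ^ (1 + (d 1 - 1)) := by
            apply Nat.pow_le_pow_right (by omega)
            omega
    have := (hd 1).2 hmem
    omega
  have hblt : b < a ^ (1 + d 1) := by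
    rcases lt_or_eq_of_le hd1 with h | h
    · exact h
    · exfalso
      have hdvd : a ∣ b := by
        rw [h]
        exact dvd_pow_self a (by omega)
      have := Nat.Coprime.eq_one_of_dvd hcop hdvd
      omega
  have hφ1 : φ 1 = (a : ℝ) ^ ((1 + d 1 : ℕ) : ℤ) / (b : ℝ) ^ (1 : ℕ) := by
    rw [hφ 1, zpow_natCast, pow_one]
  have hφ1Q : stmt8Q a b (φ 1) := ⟨(1 + d 1 : ℕ), 1, le_refl 1, hφ1⟩
  have hφ1gt : 1 < φ 1 := by
    rw [hφ 1]
    rw [lt_div_iff₀ (by positivity), one_mul]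
    have : ((b : ℝ)) ^ (1 : ℕ) = (b : ℝ) := pow_one _
    rw [this]
    exact_mod_cast hblt
  have hφ1lt : φ 1 < a := by
    rw [hφ 1]
    rw [div_lt_iff₀ (by positivity)]
    have h1 : (a : ℝ) ^ (1 + d 1) = a * (a : ℝ) ^ (d 1) := by
      rw [pow_add, pow_one]
    rw [h1, pow_one]
    have : ((a : ℝ)) ^ (d 1) < b := by exact_mod_cast hd1lt
    nlinarith
  -- the invariant
  have inv : ∀ i : ℕ, stmt8Q a b (u i) ∧ stmt8Q a b (v i) ∧
      1 < u i ∧ u i < a ∧ 1 < v i ∧ v i < a := by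
    intro i
    induction i with
    | zero => rw [hu0, hv0]; exact ⟨hφ1Q, hφ1Q, hφ1gt, hφ1lt, hφ1gt, hφ1lt⟩
    | succ n ih =>
      obtain ⟨Qu, Qv, hu1, hua, hv1, hva⟩ := ih
      have hupos : 0 < u n := by linarith
      have hvpos : 0 < v n := by linarith
      rcases lt_or_ge (u n * v n) a with h | h
      · obtain ⟨e1, e2⟩ := (huv n).1 h
        rw [e1, e2]
        refine ⟨Qu, stmt8Q_mul a b ha hb Qu Qv, hu1, hua, ?_, h⟩
        nlinarith
      · obtain ⟨e1, e2⟩ := (huv n).2 h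
        rw [e1, e2]
        have hQp : stmt8Q a b (u n * v n) := stmt8Q_mul a b ha hb Qu Qv
        have hne : u n * v n ≠ a := stmt8Q_ne a b ha hb hcop hQp
        have hgt : (a : ℝ) < u n * v n := lt_of_le_of_ne h (Ne.symm hne)
        refine ⟨stmt8Q_div a b ha hb hQp, Qv, ?_, ?_, hv1, hva⟩
        · rw [lt_div_iff₀ hApos, one_mul]; exact hgt
        · rw [div_lt_iff₀ hApos]; nlinarith
  -- monotonicity
  have mono_u : ∀ i j : ℕ, i ≤ j → u j ≤ u i := by
    intro i j hij
    induction j with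
    | zero => simp_all
    | succ n ih =>
      rcases Nat.lt_or_ge i (n + 1) with h | h
      · have hle : u n ≤ u i := ih (by omega)
        obtain ⟨_, _, hu1, _, _, hva⟩ := inv n
        rcases lt_or_ge (u n * v n) a with hc | hc
        · rw [((huv n).1 hc).1]; exact hle
        · rw [((huv n).2 hc).1]
          have : u n * v n / a ≤ u n := by
            rw [div_le_iff₀ hApos]
            nlinarith
          linarith
      · have : i = n + 1 := by omega
        rw [this]
  have mono_v : ∀ i j : ℕ, i ≤ j → v i ≤ v j := by
    intro i j hij
    induction j with
    | zero => simp_all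
    | succ n ih =>
      rcases Nat.lt_or_ge i (n + 1) with h | h
      · have hle : v i ≤ v n := ih (by omega)
        obtain ⟨_, _, hu1, _, hv1, _⟩ := inv n
        rcases lt_or_ge (u n * v n) a with hc | hc
        · rw [((huv n).1 hc).2]
          nlinarith
        · rw [((huv n).2 hc).2]; exact hle
      · have : i = n + 1 := by omega
        rw [this]
  -- eventually a case-2 step (a ≤ u j * v j) occurs
  have ev2 : ∀ i : ℕ, ∃ j : ℕ, i ≤ j ∧ (a : ℝ) ≤ u j * v j := by
    intro i
    by_contra hcon
    push_neg at hcon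
    have hconst : ∀ k : ℕ, u (i + k) = u i ∧ v (i + k) = u i ^ k * v i := by
      intro k
      induction k with
      | zero => simp
      | succ n ih =>
        obtain ⟨e1, e2⟩ := ih
        have hc := hcon (i + n) (by omega)
        obtain ⟨f1, f2⟩ := (huv (i + n)).1 hc
        constructor
        · rw [show i + (n + 1) = (i + n) + 1 from rfl, f1, e1]
        · rw [show i + (n + 1) = (i + n) + 1 from rfl, f2, e1, e2]
          ring
    obtain ⟨_, _, hu1, _, hv1, _⟩ := inv i
    obtain ⟨k, hk⟩ := pow_unbounded_of_one_lt (a : ℝ) hu1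
    have hvk := (inv (i + k)).2.2.2.2.2
    have := (hconst k).2
    nlinarith [pow_pos (lt_trans one_pos hu1) k]
  -- eventually a case-1 step (u j * v j < a) occurs
  have ev1 : ∀ i : ℕ, ∃ j : ℕ, i ≤ j ∧ u j * v j < a := by
    intro i
    by_contra hcon
    push_neg at hcon
    have hconst : ∀ k : ℕ, v (i + k) = v i ∧ u (i + k) = (v i / a) ^ k * u i := by
      intro k
      induction k with
      | zero => simp
      | succ n ih =>
        obtain ⟨e1, e2⟩ := ih
        have hc := hcon (i + n) (by omega)
        obtain ⟨f1, f2⟩ := (huv (i + n)).2 hc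
        constructor
        · rw [show i + (n + 1) = (i + n) + 1 from rfl, f2, e1]
        · rw [show i + (n + 1) = (i + n) + 1 from rfl, f1, e1, e2]
          ring
    obtain ⟨_, _, hu1, hua, hv1, hva⟩ := inv i
    have hupos : 0 < u i := by linarith
    have hr1 : v i / a < 1 := by rw [div_lt_one hApos]; exact hva
    obtain ⟨k, hk⟩ := exists_pow_lt_of_lt_one (show (0:ℝ) < 1 / u i by positivity) hr1
    have huk := (inv (i + k)).2.2.1
    have heq := (hconst k).2
    rw [heq] at huk
    have hlt : (v i / a) ^ k * u i < (1 / u i) * u i :=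
      mul_lt_mul_of_pos_right hk hupos
    rw [one_div_mul_cancel (ne_of_gt hupos)] at hlt
    linarith
  -- main argument
  intro i
  obtain ⟨j1, hj1i, hj1⟩ := ev1 i
  obtain ⟨j2, hj2i, hj2⟩ := ev2 i
  obtain ⟨N, hNj1, hNj2, hNi⟩ : ∃ N : ℕ, j1 < N ∧ j2 < N ∧ i ≤ N :=
    ⟨max j1 j2 + 1, by omega, by omega, by omega⟩
  have hvstrict : v i < v N := by
    obtain ⟨_, _, hu1, _, hv1, _⟩ := inv j1
    have e2 := ((huv j1).1 hj1).2
    have h1 : v j1 < v (j1 + 1) := by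
      rw [e2]
      have := mul_lt_mul_of_pos_right hu1 (show (0:ℝ) < v j1 by linarith)
      linarith
    have h2 : v i ≤ v j1 := mono_v i j1 hj1i
    have h3 : v (j1 + 1) ≤ v N := mono_v (j1 + 1) N (by omega)
    linarith
  have hustrict : u N < u i := by
    obtain ⟨Qu, Qv, hu1, hua, hv1, hva⟩ := inv j2
    have e1 := ((huv j2).2 hj2).1
    have h1 : u (j2 + 1) < u j2 := by
      rw [e1, div_lt_iff₀ hApos]
      have := mul_lt_mul_of_pos_left hva (show (0:ℝ) < u j2 by linarith)
      linarith
    have h2 : u j2 ≤ u i := mono_u i j2 hj2i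
    have h3 : u N ≤ u (j2 + 1) := mono_u (j2 + 1) N (by omega)
    linarith
  refine ⟨N - i, by omega, ?_, ?_⟩
  · rw [show i + (N - i) = N by omega]
    exact ne_of_lt hustrict
  · rw [show i + (N - i) = N by omega]
    exact ne_of_gt hvstrict
end

section
/- The sequence u is monotonically nonincreasing and bounded below by 1, hence converges to a limit l₁ ≥ 1; the sequence v is monotonically nondecreasing and bounded above by a, hence converges to a limit l₂ ≤ a. -/
open Filter Topology

theorem stmt_9 (a b : ℕ) (ha : 1 < a) (hab : a < b) (hcop : Nat.Coprime a b)
    (d : ℕ → ℕ) (hd : ∀ p : ℕ, IsLeast {k : ℕ | b ^ p ≤ a ^ (p + k)} (d p))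
    (φ : ℕ → ℝ) (hφ : ∀ p : ℕ, φ p = (a : ℝ) ^ (p + d p) / (b : ℝ) ^ p)
    (F : Set ℝ) (hF : F = Set.range φ)
    (u v : ℕ → ℝ) (hu0 : u 0 = φ 1) (hv0 : v 0 = φ 1)
    (huv : ∀ i : ℕ,
      (u i * v i < a → u (i + 1) = u i ∧ v (i + 1) = u i * v i) ∧
      ((a : ℝ) ≤ u i * v i → u (i + 1) = (u i * v i) / a ∧ v (i + 1) = v i)) :
    Antitone u ∧ (∀ i : ℕ, 1 ≤ u i) ∧
    (∃ l₁ : ℝ, 1 ≤ l₁ ∧ Tendsto u atTop (nhds l₁)) ∧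
    Monotone v ∧ (∀ i : ℕ, v i ≤ a) ∧
    (∃ l₂ : ℝ, l₂ ≤ a ∧ Tendsto v atTop (nhds l₂)) := by
  have ha' : (1 : ℝ) < a := by exact_mod_cast ha
  have ha0 : (0 : ℝ) < a := by linarith
  have hb' : (a : ℝ) < b := by exact_mod_cast hab
  have hb0 : (0 : ℝ) < b := by linarith
  obtain ⟨h1, h2⟩ := hd 1
  -- d 1 ≥ 1
  have hd1 : 1 ≤ d 1 := by
    by_contra h
    push_neg at h
    interval_cases hdd : d 1
    · simp only [Set.mem_setOf_eq, hdd, Nat.add_zero, pow_one] at h1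
      omega
  -- a ^ (d 1) < b
  have hmin : a ^ (d 1) < b := by
    by_contra h
    push_neg at h
    have : d 1 ≤ d 1 - 1 := h2 (by
      simp only [Set.mem_setOf_eq, pow_one]
      calc b ≤ a ^ (d 1) := h
        _ ≤ a ^ (1 + (d 1 - 1)) := by
            apply Nat.pow_le_pow_right (by omega)
            omega)
    omega
  have h1' : (b : ℝ) ≤ (a : ℝ) ^ (1 + d 1) := by
    have := h1
    simp only [Set.mem_setOf_eq, pow_one] at this
    exact_mod_cast this
  have hmin' : (a : ℝ) ^ (d 1) < b := by exact_mod_cast hmin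
  have hφ1 : 1 ≤ φ 1 := by
    rw [hφ]
    rw [le_div_iff₀ (by positivity)]
    simpa using h1'
  have hφ1a : φ 1 < a := by
    rw [hφ]
    rw [div_lt_iff₀ (by positivity)]
    have : (a : ℝ) ^ (1 + d 1) = a * (a : ℝ) ^ (d 1) := by ring
    rw [this]
    simp only [pow_one]
    nlinarith
  -- invariant
  have inv : ∀ i, 1 ≤ u i ∧ 1 ≤ v i ∧ v i < a := by
    intro i
    induction i with
    | zero => rw [hu0, hv0]; exact ⟨hφ1, hφ1, hφ1a⟩
    | succ i ih =>
      obtain ⟨hui, hvi, hvia⟩ := ih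
      rcases lt_or_ge (u i * v i) (a : ℝ) with h | h
      · obtain ⟨e1, e2⟩ := (huv i).1 h
        rw [e1, e2]
        exact ⟨hui, by nlinarith, h⟩
      · obtain ⟨e1, e2⟩ := (huv i).2 h
        rw [e1, e2]
        refine ⟨?_, hvi, hvia⟩
        rw [le_div_iff₀ ha0]
        linarith
  have ustep : ∀ i, u (i + 1) ≤ u i := by
    intro i
    obtain ⟨hui, hvi, hvia⟩ := inv i
    rcases lt_or_ge (u i * v i) (a : ℝ) with h | h
    · rw [((huv i).1 h).1]
    · rw [((huv i).2 h).1, div_le_iff₀ ha0]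
      nlinarith
  have vstep : ∀ i, v i ≤ v (i + 1) := by
    intro i
    obtain ⟨hui, hvi, hvia⟩ := inv i
    rcases lt_or_ge (u i * v i) (a : ℝ) with h | h
    · rw [((huv i).1 h).2]
      nlinarith
    · rw [((huv i).2 h).2]
  have hanti : Antitone u := antitone_nat_of_succ_le ustep
  have hmono : Monotone v := monotone_nat_of_le_succ vstep
  have hub : ∀ i, 1 ≤ u i := fun i => (inv i).1
  have hvb : ∀ i, v i ≤ a := fun i => le_of_lt (inv i).2.2
  have hbdd : BddBelow (Set.range u) := ⟨1, by rintro x ⟨i, rfl⟩; exact hub i⟩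
  have hbdd' : BddAbove (Set.range v) := ⟨a, by rintro x ⟨i, rfl⟩; exact hvb i⟩
  refine ⟨hanti, hub, ⟨⨅ i, u i, ?_, tendsto_atTop_ciInf hanti hbdd⟩,
    hmono, hvb, ⟨⨆ i, v i, ?_, tendsto_atTop_ciSup hmono hbdd'⟩⟩
  · exact le_ciInf hub
  · exact ciSup_le hvb
end

section
/- For all i, k : ℕ: if u (i+j) = u i for all 0 ≤ j ≤ k, then v (i+k) = v i · (u i)^k; and if v (i+j) = v i for all 0 ≤ j ≤ k, then u (i+k) = u i · (v i / a)^k. -/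
theorem stmt_10 (a b : ℕ) (ha : 1 < a) (hab : a < b) (hcop : Nat.Coprime a b)
    (d : ℕ → ℕ) (hd : ∀ p : ℕ, IsLeast {k : ℕ | b ^ p ≤ a ^ (p + k)} (d p))
    (φ : ℕ → ℝ) (hφ : ∀ p : ℕ, φ p = (a : ℝ) ^ (p + d p) / (b : ℝ) ^ p)
    (F : Set ℝ) (hF : F = Set.range φ)
    (u v : ℕ → ℝ) (hu0 : u 0 = φ 1) (hv0 : v 0 = φ 1)
    (huv : ∀ i : ℕ,
      (u i * v i < a → u (i + 1) = u i ∧ v (i + 1) = u i * v i) ∧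
      ((a : ℝ) ≤ u i * v i → u (i + 1) = (u i * v i) / a ∧ v (i + 1) = v i)) :
    ∀ i k : ℕ,
      ((∀ j : ℕ, j ≤ k → u (i + j) = u i) → v (i + k) = v i * (u i) ^ k) ∧
      ((∀ j : ℕ, j ≤ k → v (i + j) = v i) → u (i + k) = u i * (v i / a) ^ k) := by
  have hb : 1 < b := lt_trans ha hab
  have ha0 : (0:ℝ) < (a:ℝ) := by exact_mod_cast Nat.lt_of_lt_of_le Nat.zero_lt_one ha.le
  have hb0 : (0:ℝ) < (b:ℝ) := by exact_mod_cast Nat.lt_of_lt_of_le Nat.zero_lt_one hb.le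
  -- representation invariant
  set P : ℝ → Prop := fun x => ∃ m n : ℕ, 1 ≤ m ∧ 1 ≤ n ∧ x = (a:ℝ)^m / (b:ℝ)^n with hP
  have hPne1 : ∀ x, P x → x ≠ 1 := by
    intro x ⟨m, n, hm, hn, hx⟩ hx1
    rw [hx] at hx1
    have heq : (a:ℝ)^m = (b:ℝ)^n := by
      field_simp at hx1; linarith [hx1]
    have hnat : a ^ m = b ^ n := by exact_mod_cast heq
    have hc : Nat.Coprime (a ^ m) (b ^ n) := Nat.Coprime.pow m n hcop
    rw [hnat] at hc
    have := hc.eq_one_of_dvd dvd_rfl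
    have hble : b ≤ b ^ n := Nat.le_self_pow (by omega) b
    omega
  have hPnea : ∀ x, P x → x ≠ (a:ℝ) := by
    intro x ⟨m, n, hm, hn, hx⟩ hx1
    rw [hx] at hx1
    have heq : (a:ℝ)^m = (a:ℝ) * (b:ℝ)^n := by
      field_simp at hx1; linarith [hx1]
    have hnat : a ^ m = a * b ^ n := by exact_mod_cast heq
    have hdvd : b ^ n ∣ a ^ m := ⟨a, by rw [hnat]; ring⟩
    have hc : Nat.Coprime (b ^ n) (a ^ m) := (Nat.Coprime.pow m n hcop).symm
    have := hc.eq_one_of_dvd hdvd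
    have hble : b ≤ b ^ n := Nat.le_self_pow (by omega) b
    omega
  have hPpos : ∀ x, P x → 0 < x := by
    intro x ⟨m, n, hm, hn, hx⟩
    rw [hx]; positivity
  have inv : ∀ i : ℕ, P (u i) ∧ P (v i) := by
    intro i
    induction i with
    | zero =>
      have h1 : P (φ 1) := by
        refine ⟨1 + d 1, 1, by omega, le_refl 1, ?_⟩
        rw [hφ 1]
      exact ⟨hu0 ▸ h1, hv0 ▸ h1⟩
    | succ i ih =>
      obtain ⟨⟨m, n, hm, hn, hxu⟩, ⟨m', n', hm', hn', hxv⟩⟩ := ih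
      have hprod : u i * v i = (a:ℝ)^(m+m') / (b:ℝ)^(n+n') := by
        rw [hxu, hxv, pow_add, pow_add]
        field_simp
        try ring
      rcases lt_or_ge (u i * v i) (a:ℝ) with h | h
      · obtain ⟨e1, e2⟩ := (huv i).1 h
        exact ⟨⟨m, n, hm, hn, by rw [e1, hxu]⟩,
               ⟨m + m', n + n', by omega, by omega, by rw [e2, hprod]⟩⟩
      · obtain ⟨e1, e2⟩ := (huv i).2 h
        refine ⟨⟨m + m' - 1, n + n', by omega, by omega, ?_⟩,
               ⟨m', n', hm', hn', by rw [e2, hxv]⟩⟩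
        rw [e1, hprod]
        have : (a:ℝ)^(m+m') = (a:ℝ)^(m+m'-1) * (a:ℝ) := by
          rw [← pow_succ]
          congr 1
          omega
        rw [this]
        field_simp
  intro i k
  induction k with
  | zero => simp
  | succ k ih =>
    constructor
    · intro hj
      have hu' : ∀ j : ℕ, j ≤ k → u (i + j) = u i := fun j hjk => hj j (by omega)
      have hv' : v (i + k) = v i * u i ^ k := ih.1 hu'
      rcases lt_or_ge (u (i + k) * v (i + k)) (a:ℝ) with h | h
      · have e2 : v (i + k + 1) = u (i + k) * v (i + k) := ((huv (i + k)).1 h).2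
        have eu : u (i + k) = u i := hu' k le_rfl
        show v (i + k + 1) = v i * u i ^ (k + 1)
        rw [e2, eu, hv']; ring
      · exfalso
        have e1 : u (i + k + 1) = u (i + k) * v (i + k) / a := ((huv (i + k)).2 h).1
        have eu : u (i + k) = u i := hu' k le_rfl
        have eu' : u (i + k + 1) = u i := hj (k + 1) le_rfl
        have hune : u i ≠ 0 := ne_of_gt (hPpos _ (eu ▸ (inv (i + k)).1))
        have h4 : u (i + k) * v (i + k) = u i * a :=
          (div_eq_iff (ne_of_gt ha0)).mp (e1.symm.trans eu')
        rw [eu] at h4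
        have hva : v (i + k) = (a:ℝ) := mul_left_cancel₀ hune h4
        exact hPnea _ (inv (i + k)).2 hva
    · intro hj
      have hv' : ∀ j : ℕ, j ≤ k → v (i + j) = v i := fun j hjk => hj j (by omega)
      have hu' : u (i + k) = u i * (v i / a) ^ k := ih.2 hv'
      rcases lt_or_ge (u (i + k) * v (i + k)) (a:ℝ) with h | h
      · exfalso
        have e2 : v (i + k + 1) = u (i + k) * v (i + k) := ((huv (i + k)).1 h).2
        have ev : v (i + k) = v i := hv' k le_rfl
        have ev' : v (i + k + 1) = v i := hj (k + 1) le_rfl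
        have hvne : v (i + k) ≠ 0 := ne_of_gt (hPpos _ (inv (i + k)).2)
        have h3 : u (i + k) * v (i + k) = 1 * v (i + k) := by
          rw [one_mul, ← e2, ev', ev]
        have hu1 : u (i + k) = 1 := mul_right_cancel₀ hvne h3
        exact hPne1 _ (inv (i + k)).1 hu1
      · have e1 : u (i + k + 1) = u (i + k) * v (i + k) / a := ((huv (i + k)).2 h).1
        have ev : v (i + k) = v i := hv' k le_rfl
        show u (i + k + 1) = u i * (v i / a) ^ (k + 1)
        rw [e1, ev, hu']; ring
end

section
/- The set {u i : i ∈ ℕ} equals the set of minimum record holders, i.e. the set of real numbers φ(p) with p ≥ 1 such that φ(p) = min{φ(p') : 1 ≤ p' ≤ p}; and the set {v i : i ∈ ℕ} equals the set of maximum record holders, i.e. the set of real numbers φ(p) with p ≥ 1 such that φ(p) = max{φ(p') : 1 ≤ p' ≤ p}. -/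
open Classical in
noncomputable def sv11 (A : ℝ) (φ : ℕ → ℝ) : ℕ → ℕ × ℕ
  | 0 => (1, 1)
  | i + 1 =>
      if φ (sv11 A φ i).1 * φ (sv11 A φ i).2 < A then
        ((sv11 A φ i).1, (sv11 A φ i).1 + (sv11 A φ i).2)
      else ((sv11 A φ i).1 + (sv11 A φ i).2, (sv11 A φ i).2)

set_option maxHeartbeats 1000000 in
theorem stmt_11 (a b : ℕ) (ha : 1 < a) (hab : a < b) (hcop : Nat.Coprime a b)
    (d : ℕ → ℕ) (hd : ∀ p : ℕ, IsLeast {k : ℕ | b ^ p ≤ a ^ (p + k)} (d p))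
    (φ : ℕ → ℝ) (hφ : ∀ p : ℕ, φ p = (a : ℝ) ^ (p + d p) / (b : ℝ) ^ p)
    (F : Set ℝ) (hF : F = Set.range φ)
    (u v : ℕ → ℝ) (hu0 : u 0 = φ 1) (hv0 : v 0 = φ 1)
    (huv : ∀ i : ℕ,
      (u i * v i < a → u (i + 1) = u i ∧ v (i + 1) = u i * v i) ∧
      ((a : ℝ) ≤ u i * v i → u (i + 1) = (u i * v i) / a ∧ v (i + 1) = v i)) :
    Set.range u =
      {x : ℝ | ∃ p : ℕ, 1 ≤ p ∧ x = φ p ∧ ∀ p' : ℕ, 1 ≤ p' → p' ≤ p → φ p ≤ φ p'} ∧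
    Set.range v =
      {x : ℝ | ∃ p : ℕ, 1 ≤ p ∧ x = φ p ∧ ∀ p' : ℕ, 1 ≤ p' → p' ≤ p → φ p' ≤ φ p} := by
  have hA1 : (1:ℝ) < (a:ℝ) := by exact_mod_cast ha
  have hA0 : (0:ℝ) < (a:ℝ) := by linarith
  have hB0 : (0:ℝ) < (b:ℝ) := by
    have : (1:ℝ) < (b:ℝ) := by exact_mod_cast lt_trans ha hab
    linarith
  -- d p ≥ 1 for p ≥ 1
  have hdpos : ∀ p : ℕ, 1 ≤ p → 1 ≤ d p := by
    intro p hp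
    by_contra h
    have hd0 : d p = 0 := by omega
    have h1 := (hd p).1
    rw [Set.mem_setOf_eq, hd0, add_zero] at h1
    have h2 : a ^ p < b ^ p := Nat.pow_lt_pow_left hab (by omega)
    omega
  -- L1 : 1 ≤ φ p
  have L1 : ∀ p : ℕ, (1:ℝ) ≤ φ p := by
    intro p
    rw [hφ, le_div_iff₀ (by positivity), one_mul]
    have h1 := (hd p).1
    rw [Set.mem_setOf_eq] at h1
    exact_mod_cast h1
  -- L2 : φ p < a for p ≥ 1
  have L2 : ∀ p : ℕ, 1 ≤ p → φ p < (a:ℝ) := by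
    intro p hp
    have h1 : ¬ b ^ p ≤ a ^ (p + (d p - 1)) := by
      intro h
      have := (hd p).2 h
      have := hdpos p hp
      omega
    push_neg at h1
    rw [hφ, div_lt_iff₀ (by positivity)]
    have h2 : ((a:ℝ)) ^ (p + (d p - 1)) < (b:ℝ) ^ p := by exact_mod_cast h1
    have h3 : (a:ℝ) ^ (p + d p) = (a:ℝ) * (a:ℝ) ^ (p + (d p - 1)) := by
      rw [← pow_succ']
      congr 1
      have := hdpos p hp
      omega
    rw [h3]
    exact mul_lt_mul_of_pos_left h2 hA0
  -- additivity
  have L3 : ∀ p q : ℕ, 1 ≤ p → 1 ≤ q →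
      (φ p * φ q < (a:ℝ) → φ (p + q) = φ p * φ q) ∧
      ((a:ℝ) ≤ φ p * φ q → φ (p + q) = φ p * φ q / (a:ℝ)) := by
    intro p q hp hq
    have hdp := hdpos p hp
    have hdq := hdpos q hq
    set D := d p + d q with hD
    have hD2 : 2 ≤ D := by omega
    have key : φ p * φ q = (a:ℝ) ^ (p + q + D) / (b:ℝ) ^ (p + q) := by
      rw [hφ, hφ, div_mul_div_comm, ← pow_add, ← pow_add]
      congr 2
      omega
    constructor
    · intro h
      have hub : b ^ (p + q) ≤ a ^ (p + q + D) := by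
        have h1 : (1:ℝ) ≤ (a:ℝ) ^ (p + q + D) / (b:ℝ) ^ (p + q) := by
          rw [← key]
          exact one_le_mul_of_one_le_of_one_le (L1 p) (L1 q)
        rw [le_div_iff₀ (by positivity), one_mul] at h1
        exact_mod_cast h1
      have hlb : ¬ b ^ (p + q) ≤ a ^ (p + q + (D - 1)) := by
        intro hcon
        have h1 : ((b:ℝ)) ^ (p + q) ≤ (a:ℝ) ^ (p + q + (D - 1)) := by exact_mod_cast hcon
        have h2 : (a:ℝ) ≤ (a:ℝ) ^ (p + q + D) / (b:ℝ) ^ (p + q) := by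
          rw [le_div_iff₀ (by positivity)]
          calc (a:ℝ) * (b:ℝ) ^ (p + q) ≤ (a:ℝ) * (a:ℝ) ^ (p + q + (D - 1)) := by
                exact mul_le_mul_of_nonneg_left h1 (le_of_lt hA0)
            _ = (a:ℝ) ^ (p + q + D) := by
                rw [← pow_succ']
                congr 1
                omega
        rw [← key] at h2
        linarith
    -- d (p+q) = D
      have hdeq : d (p + q) = D := by
        have h1 : d (p + q) ≤ D := (hd (p + q)).2 hub
        by_contra hne
        have h2 : d (p + q) ≤ D - 1 := by omega
        have h3 := (hd (p + q)).1
        rw [Set.mem_setOf_eq] at h3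
        have h4 : a ^ (p + q + d (p + q)) ≤ a ^ (p + q + (D - 1)) :=
          Nat.pow_le_pow_right (by omega) (by omega)
        exact hlb (le_trans h3 h4)
      rw [hφ, hdeq, key]
    · intro h
      have hub : b ^ (p + q) ≤ a ^ (p + q + (D - 1)) := by
        have h1 : (a:ℝ) * (b:ℝ) ^ (p + q) ≤ (a:ℝ) ^ (p + q + D) := by
          rw [key, le_div_iff₀ (by positivity)] at h
          linarith
        have h2 : (a:ℝ) ^ (p + q + D) = (a:ℝ) * (a:ℝ) ^ (p + q + (D - 1)) := by
          rw [← pow_succ']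
          congr 1
          omega
        rw [h2] at h1
        have h3 : ((b:ℝ)) ^ (p + q) ≤ (a:ℝ) ^ (p + q + (D - 1)) := by
          exact le_of_mul_le_mul_left h1 hA0
        exact_mod_cast h3
      have hlb : ¬ b ^ (p + q) ≤ a ^ (p + q + (D - 2)) := by
        intro hcon
        have h1 : ((b:ℝ)) ^ (p + q) ≤ (a:ℝ) ^ (p + q + (D - 2)) := by exact_mod_cast hcon
        have h2 : φ p * φ q < (a:ℝ) * (a:ℝ) := mul_lt_mul'' (L2 p hp) (L2 q hq) (by linarith [L1 p]) (by linarith [L1 q])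
        have h3 : (a:ℝ) ^ (p + q + D) < (a:ℝ) * (a:ℝ) * (b:ℝ) ^ (p + q) := by
          rw [key, div_lt_iff₀ (by positivity)] at h2
          linarith
        have h4 : (a:ℝ) ^ (p + q + D) = (a:ℝ) * (a:ℝ) * (a:ℝ) ^ (p + q + (D - 2)) := by
          rw [mul_assoc, ← pow_succ', ← pow_succ']
          congr 1
          omega
        rw [h4] at h3
        have h5 : ((a:ℝ)) ^ (p + q + (D - 2)) < (b:ℝ) ^ (p + q) := by
          have := mul_lt_mul_iff_right₀ (show (0:ℝ) < (a:ℝ)*(a:ℝ) by positivity) |>.mp h3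
          exact this
        have h6 : a ^ (p + q + (D - 2)) < b ^ (p + q) := by exact_mod_cast h5
        omega
      have hdeq : d (p + q) = D - 1 := by
        have h1 : d (p + q) ≤ D - 1 := (hd (p + q)).2 hub
        by_contra hne
        have h2 : d (p + q) ≤ D - 2 := by omega
        have h3 := (hd (p + q)).1
        rw [Set.mem_setOf_eq] at h3
        have h4 : a ^ (p + q + d (p + q)) ≤ a ^ (p + q + (D - 2)) :=
          Nat.pow_le_pow_right (by omega) (by omega)
        exact hlb (le_trans h3 h4)
      have hsplit : (a:ℝ) ^ (p + q + D) = (a:ℝ) ^ (p + q + (D - 1)) * (a:ℝ) := by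
        rw [← pow_succ]
        congr 1
        omega
      rw [hφ, hdeq, key, hsplit]
      field_simp
  -- the index sequences
  set S : ℕ → ℕ := fun i => (sv11 (a:ℝ) φ i).1 with hS
  set T : ℕ → ℕ := fun i => (sv11 (a:ℝ) φ i).2 with hT
  have hsv0 : S 0 = 1 ∧ T 0 = 1 := by constructor <;> rfl
  have hsvsucc : ∀ i, (φ (S i) * φ (T i) < (a:ℝ) → S (i+1) = S i ∧ T (i+1) = S i + T i) ∧
      (¬ (φ (S i) * φ (T i) < (a:ℝ)) → S (i+1) = S i + T i ∧ T (i+1) = T i) := by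
    intro i
    constructor
    · intro h
      constructor <;> simp only [hS, hT, sv11, if_pos (show φ (sv11 (a:ℝ) φ i).1 * φ (sv11 (a:ℝ) φ i).2 < (a:ℝ) from h)]
    · intro h
      constructor <;> simp only [hS, hT, sv11, if_neg (show ¬ (φ (sv11 (a:ℝ) φ i).1 * φ (sv11 (a:ℝ) φ i).2 < (a:ℝ)) from h)]
  -- main invariant
  have Inv : ∀ i : ℕ, u i = φ (S i) ∧ v i = φ (T i) ∧ 1 ≤ S i ∧ 1 ≤ T i ∧
      ∀ j : ℕ, 1 ≤ j → j < S i + T i → φ (S i) ≤ φ j ∧ φ j ≤ φ (T i) := by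
    intro i
    induction i with
    | zero =>
      refine ⟨by rw [hsv0.1]; exact hu0, by rw [hsv0.2]; exact hv0, by rw [hsv0.1],
        by rw [hsv0.2], ?_⟩
      intro j hj1 hj2
      rw [hsv0.1, hsv0.2] at hj2 ⊢
      have : j = 1 := by omega
      subst this
      exact ⟨le_refl _, le_refl _⟩
    | succ i ih =>
      obtain ⟨hui, hvi, hSi, hTi, hinv⟩ := ih
      by_cases h : φ (S i) * φ (T i) < (a:ℝ)
      · obtain ⟨hS1, hT1⟩ := (hsvsucc i).1 h
        have huv1 := (huv i).1 (by rw [hui, hvi]; exact h)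
        have hnew : φ (S i + T i) = φ (S i) * φ (T i) := (L3 (S i) (T i) hSi hTi).1 h
        have hTle : φ (T i) ≤ φ (S i + T i) := by
          rw [hnew]
          nlinarith [L1 (S i), L1 (T i)]
        refine ⟨by rw [hS1, huv1.1, hui], by rw [hT1, huv1.2, hui, hvi, hnew], by omega, by omega, ?_⟩
        rw [hS1, hT1]
        intro j hj1 hj2
        by_cases hjc : j < S i + T i
        · obtain ⟨ha1, ha2⟩ := hinv j hj1 hjc
          exact ⟨ha1, le_trans ha2 hTle⟩
        · -- j = S i + j' with T i ≤ j' < S i + T i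
          push_neg at hjc
          set j' := j - S i with hj'
          have hjeq : j = S i + j' := by omega
          have hj'1 : T i ≤ j' := by omega
          have hj'2 : j' < S i + T i := by omega
          obtain ⟨hb1, hb2⟩ := hinv j' (by omega) hj'2
          have hprod : φ (S i) * φ j' < (a:ℝ) := by
            have : φ (S i) * φ j' ≤ φ (S i) * φ (T i) := by
              nlinarith [L1 (S i)]
            linarith
          have hje : φ j = φ (S i) * φ j' := by
            rw [hjeq]
            exact (L3 (S i) j' hSi (by omega)).1 hprod
          constructor
          · rw [hje]
            nlinarith [L1 j', L1 (S i)]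
          · rw [hje, hnew]
            nlinarith [L1 (S i)]
      · obtain ⟨hS1, hT1⟩ := (hsvsucc i).2 h
        push_neg at h
        have huv2 := (huv i).2 (by rw [hui, hvi]; exact h)
        have hnew : φ (S i + T i) = φ (S i) * φ (T i) / (a:ℝ) := (L3 (S i) (T i) hSi hTi).2 h
        have hSle : φ (S i + T i) ≤ φ (S i) := by
          rw [hnew, div_le_iff₀ hA0]
          nlinarith [L2 (T i) hTi, L1 (S i)]
        refine ⟨by rw [hS1, huv2.1, hui, hvi, hnew], by rw [hT1, huv2.2, hvi], by omega, by omega, ?_⟩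
        rw [hS1, hT1]
        intro j hj1 hj2
        by_cases hjc : j < S i + T i
        · obtain ⟨ha1, ha2⟩ := hinv j hj1 hjc
          exact ⟨le_trans hSle ha1, ha2⟩
        · push_neg at hjc
          set j' := j - T i with hj'
          have hjeq : j = T i + j' := by omega
          have hj'1 : S i ≤ j' := by omega
          have hj'2 : j' < S i + T i := by omega
          obtain ⟨hb1, hb2⟩ := hinv j' (by omega) hj'2
          have hprod : (a:ℝ) ≤ φ (T i) * φ j' := by
            have : φ (S i) * φ (T i) ≤ φ (T i) * φ j' := by
              nlinarith [L1 (T i)]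
            linarith
          have hje : φ j = φ (T i) * φ j' / (a:ℝ) := by
            rw [hjeq]
            exact (L3 (T i) j' hTi (by omega)).2 hprod
          constructor
          · rw [hje, hnew]
            have h1 : φ (S i) * φ (T i) ≤ φ (T i) * φ j' := by nlinarith [L1 (T i)]
            rw [div_le_div_iff₀ hA0 hA0]
            exact mul_le_mul_of_nonneg_right h1 hA0.le
          · rw [hje, div_le_iff₀ hA0]
            nlinarith [L2 (T i) hTi, L1 (T i), hb2, L1 j']
  -- step bounds
  have Step : ∀ i : ℕ, S (i+1) ≤ S i + T i ∧ T (i+1) ≤ S i + T i ∧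
      S i + T i < S (i+1) + T (i+1) := by
    intro i
    obtain ⟨_, _, hSi, hTi, _⟩ := Inv i
    by_cases h : φ (S i) * φ (T i) < (a:ℝ)
    · obtain ⟨h1, h2⟩ := (hsvsucc i).1 h
      omega
    · obtain ⟨h1, h2⟩ := (hsvsucc i).2 h
      omega
  -- covering
  have Cover : ∀ p : ℕ, 1 ≤ p → (∃ i, S i ≤ p ∧ p < S i + T i) ∧
      (∃ i, T i ≤ p ∧ p < S i + T i) := by
    intro p hp
    induction p with
    | zero => omega
    | succ n ih =>
      by_cases hn : n = 0
      · subst hn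
        refine ⟨⟨0, ?_⟩, ⟨0, ?_⟩⟩ <;> rw [hsv0.1, hsv0.2] <;> omega
      · obtain ⟨⟨i, hi1, hi2⟩, ⟨i', hi1', hi2'⟩⟩ := ih (by omega)
        constructor
        · by_cases hc : n + 1 < S i + T i
          · exact ⟨i, by omega, hc⟩
          · refine ⟨i + 1, ?_, ?_⟩
            · have := Step i
              omega
            · have := Step i
              omega
        · by_cases hc : n + 1 < S i' + T i'
          · exact ⟨i', by omega, hc⟩
          · refine ⟨i' + 1, ?_, ?_⟩
            · have := Step i'
              omega
            · have := Step i'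
              omega
  constructor
  · ext x
    simp only [Set.mem_range, Set.mem_setOf_eq]
    constructor
    · rintro ⟨i, rfl⟩
      obtain ⟨hui, hvi, hSi, hTi, hinv⟩ := Inv i
      exact ⟨S i, hSi, hui, fun p' hp'1 hp'2 => (hinv p' hp'1 (by omega)).1⟩
    · rintro ⟨p, hp, hx, hrec⟩
      obtain ⟨i, hi1, hi2⟩ := (Cover p hp).1
      obtain ⟨hui, hvi, hSi, hTi, hinv⟩ := Inv i
      refine ⟨i, ?_⟩
      rw [hui, hx]
      exact le_antisymm (hinv p hp hi2).1 (hrec (S i) hSi hi1)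
  · ext x
    simp only [Set.mem_range, Set.mem_setOf_eq]
    constructor
    · rintro ⟨i, rfl⟩
      obtain ⟨hui, hvi, hSi, hTi, hinv⟩ := Inv i
      exact ⟨T i, hTi, hvi, fun p' hp'1 hp'2 => (hinv p' hp'1 (by omega)).2⟩
    · rintro ⟨p, hp, hx, hrec⟩
      obtain ⟨i, hi1, hi2⟩ := (Cover p hp).2
      obtain ⟨hui, hvi, hSi, hTi, hinv⟩ := Inv i
      refine ⟨i, ?_⟩
      rw [hvi, hx]
      exact le_antisymm (hrec (T i) hTi hi1) (hinv p hp hi2).2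
end

section
/- For every i : ℕ one has 1 < u (i+1) < w (i+1) < u i < w i; in particular both sequences are strictly decreasing and bounded below by 1. -/
theorem stmt_14 (u w : ℕ → ℝ) (hu0 : 1 < u 0) (huw0 : u 0 < w 0)
    (hrec : ∀ i : ℕ, ∃ l1 l2 : ℕ, 0 < l1 ∧ 0 < l2 ∧
      (u i) ^ l1 < w i ∧ w i < (u i) ^ (l1 + 1) ∧ w (i + 1) = w i / (u i) ^ l1 ∧
      (w (i + 1)) ^ l2 < u i ∧ u i < (w (i + 1)) ^ (l2 + 1) ∧
      u (i + 1) = u i / (w (i + 1)) ^ l2) :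
    (∀ i : ℕ, 1 < u (i + 1) ∧ u (i + 1) < w (i + 1) ∧ w (i + 1) < u i ∧ u i < w i) ∧
    StrictAnti u ∧ StrictAnti w ∧ (∀ i : ℕ, 1 < u i ∧ 1 < w i) := by
  have key : ∀ i : ℕ, 1 < u i ∧ u i < w i →
      1 < u (i + 1) ∧ u (i + 1) < w (i + 1) ∧ w (i + 1) < u i := by
    intro i ⟨hui, huwi⟩
    obtain ⟨l1, l2, hl1, hl2, h1, h2, h3, h4, h5, h6⟩ := hrec i
    have hupos : (0:ℝ) < u i ^ l1 := pow_pos (by linarith) l1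
    have hw1 : 1 < w (i + 1) := by
      rw [h3]; exact (one_lt_div hupos).mpr h1
    have hwlt : w (i + 1) < u i := by
      rw [h3, div_lt_iff₀ hupos]
      calc w i < u i ^ (l1 + 1) := h2
        _ = u i * u i ^ l1 := by ring
    have hwpos : (0:ℝ) < w (i + 1) ^ l2 := pow_pos (by linarith) l2
    refine ⟨?_, ?_, hwlt⟩
    · rw [h6]; exact (one_lt_div hwpos).mpr h4
    · rw [h6, div_lt_iff₀ hwpos]
      calc u i < w (i + 1) ^ (l2 + 1) := h5
        _ = w (i + 1) * w (i + 1) ^ l2 := by ring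
  have base : ∀ i : ℕ, 1 < u i ∧ u i < w i := by
    intro i
    induction i with
    | zero => exact ⟨hu0, huw0⟩
    | succ n ih =>
      obtain ⟨h1, h2, h3⟩ := key n ih
      exact ⟨h1, h2⟩
  have main : ∀ i : ℕ, 1 < u (i + 1) ∧ u (i + 1) < w (i + 1) ∧ w (i + 1) < u i ∧ u i < w i := by
    intro i
    obtain ⟨h1, h2, h3⟩ := key i (base i)
    exact ⟨h1, h2, h3, (base i).2⟩
  refine ⟨main, ?_, ?_, fun i => ⟨(base i).1, lt_trans (base i).1 (base i).2⟩⟩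
  · exact strictAnti_nat_of_succ_lt fun n => by
      obtain ⟨h1, h2, h3, h4⟩ := main n; linarith
  · exact strictAnti_nat_of_succ_lt fun n => by
      obtain ⟨h1, h2, h3, h4⟩ := main n; linarith
end

section
/- The sequence u converges to 1 and the sequence v converges to a: lim_{i→∞} u i = 1 and lim_{i→∞} v i = a. -/
open Filter Topology

lemma aux_ne (a b : ℕ) (ha : 1 < a) (hb : 1 < b) (hcop : Nat.Coprime a b)
    (x : ℝ) (m : ℤ) (n : ℕ) (hn : 0 < n) (hx : x * (b:ℝ)^n = (a:ℝ)^m)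
    (k : ℤ) : x ≠ (a:ℝ)^k := by
  intro h
  subst h
  have ha' : (1:ℝ) < a := by exact_mod_cast ha
  have hb' : (1:ℝ) < b := by exact_mod_cast hb
  have ha0 : (a:ℝ) ≠ 0 := by positivity
  have h2 : (b:ℝ)^n = (a:ℝ)^(m-k) := by
    rw [zpow_sub₀ ha0, eq_div_iff (by positivity)]
    linear_combination hx
  have h3 : (1:ℝ) < (b:ℝ)^n := one_lt_pow₀ hb' hn.ne'
  have hmk : 0 < m - k := by
    by_contra hle
    push_neg at hle
    have : (a:ℝ)^(m-k) ≤ 1 := zpow_le_one_of_nonpos₀ (le_of_lt ha') hle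
    rw [h2] at h3; linarith
  set j := (m-k).toNat with hj
  have h4 : (b:ℝ)^n = (a:ℝ)^j := by
    rw [h2, ← zpow_natCast]
    congr 1
    omega
  have h5 : b^n = a^j := by exact_mod_cast h4
  have h6 : Nat.Coprime (a^j) (b^n) := Nat.Coprime.pow j n hcop
  rw [← h5] at h6
  have h7 : a^j = 1 := by rw [h5] at h6; simpa [Nat.Coprime, Nat.gcd_self] using h6
  have hj0 : j ≠ 0 := by omega
  have := Nat.one_lt_pow hj0 ha
  omega

theorem stmt_17 (a b : ℕ) (ha : 1 < a) (hab : a < b) (hcop : Nat.Coprime a b)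
    (d : ℕ → ℕ) (hd : ∀ p : ℕ, IsLeast {k : ℕ | b ^ p ≤ a ^ (p + k)} (d p))
    (φ : ℕ → ℝ) (hφ : ∀ p : ℕ, φ p = (a : ℝ) ^ (p + d p) / (b : ℝ) ^ p)
    (F : Set ℝ) (hF : F = Set.range φ)
    (u v : ℕ → ℝ) (hu0 : u 0 = φ 1) (hv0 : v 0 = φ 1)
    (huv : ∀ i : ℕ,
      (u i * v i < a → u (i + 1) = u i ∧ v (i + 1) = u i * v i) ∧
      ((a : ℝ) ≤ u i * v i → u (i + 1) = (u i * v i) / a ∧ v (i + 1) = v i)) :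
    Filter.Tendsto u Filter.atTop (nhds 1) ∧
      Filter.Tendsto v Filter.atTop (nhds (a : ℝ)) := by
  have hb : 1 < b := lt_trans ha hab
  have ha' : (1:ℝ) < a := by exact_mod_cast ha
  have hb' : (1:ℝ) < b := by exact_mod_cast hb
  have hab' : (a:ℝ) < b := by exact_mod_cast hab
  have ha0 : (0:ℝ) < a := by linarith
  have hb0 : (0:ℝ) < b := by linarith
  -- bounds on φ 1
  obtain ⟨hd1, hdmin⟩ := hd 1
  simp only [Set.mem_setOf_eq, pow_one] at hd1
  have hd1pos : 0 < d 1 := by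
    rcases Nat.eq_zero_or_pos (d 1) with h | h
    · rw [h] at hd1; simp at hd1; omega
    · exact h
  have hlow : a ^ (d 1) < b := by
    by_contra hle
    push_neg at hle
    have : d 1 ≤ d 1 - 1 := hdmin (by
      simp only [Set.mem_setOf_eq, pow_one]
      calc b ≤ a ^ (d 1) := hle
      _ ≤ a ^ (1 + (d 1 - 1)) := by
        apply Nat.pow_le_pow_right (by omega)
        omega)
    omega
  have hne : b ≠ a ^ (1 + d 1) := by
    intro h
    have hdvd : a ∣ b := ⟨a ^ (d 1), by rw [h, pow_add, pow_one]⟩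
    have := Nat.Coprime.eq_one_of_dvd hcop hdvd
    omega
  have hup : b < a ^ (1 + d 1) := lt_of_le_of_ne hd1 (by omega)
  have hφ1 : φ 1 = (a:ℝ) ^ (1 + d 1) / (b:ℝ) := by rw [hφ 1]; norm_num
  have hφ1_gt : 1 < φ 1 := by
    rw [hφ1, lt_div_iff₀ hb0, one_mul]
    exact_mod_cast hup
  have hφ1_lt : φ 1 < a := by
    rw [hφ1, div_lt_iff₀ hb0]
    have : (a:ℝ) ^ (1 + d 1) = a * (a:ℝ)^(d 1) := by rw [pow_add, pow_one]
    rw [this]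
    have : ((a:ℝ))^(d 1) < b := by exact_mod_cast hlow
    nlinarith
  -- the arithmetic invariant
  set Inv : ℝ → Prop := fun x => ∃ m : ℤ, ∃ n : ℕ, 0 < n ∧ x * (b:ℝ)^n = (a:ℝ)^m with hInv
  have inv_ne : ∀ x, Inv x → ∀ k : ℤ, x ≠ (a:ℝ)^k := by
    rintro x ⟨m, n, hn, hx⟩ k
    exact aux_ne a b ha hb hcop x m n hn hx k
  have inv_mul : ∀ x y, Inv x → Inv y → Inv (x * y) := by
    rintro x y ⟨m1, n1, hn1, hx⟩ ⟨m2, n2, hn2, hy⟩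
    exact ⟨m1 + m2, n1 + n2, by omega, by
      rw [pow_add, zpow_add₀ (by positivity), ← hx, ← hy]; ring⟩
  have inv_diva : ∀ x, Inv x → Inv (x / a) := by
    rintro x ⟨m, n, hn, hx⟩
    exact ⟨m - 1, n, hn, by
      rw [zpow_sub₀ (by positivity), ← hx, zpow_one]; ring⟩
  have invφ1 : Inv (φ 1) := by
    refine ⟨(1 + d 1 : ℕ), 1, Nat.one_pos, ?_⟩
    rw [hφ1, pow_one, div_mul_cancel₀ _ (ne_of_gt hb0), zpow_natCast]
  -- main invariant
  have good : ∀ i, (1 ≤ u i ∧ u i < a ∧ 1 ≤ v i ∧ v i < a) ∧ Inv (u i) ∧ Inv (v i) := by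
    intro i
    induction i with
    | zero =>
      rw [hu0, hv0]
      exact ⟨⟨le_of_lt hφ1_gt, hφ1_lt, le_of_lt hφ1_gt, hφ1_lt⟩, invφ1, invφ1⟩
    | succ i ih =>
      obtain ⟨⟨hu1, hua, hv1, hva⟩, hiu, hiv⟩ := ih
      rcases lt_or_ge (u i * v i) (a:ℝ) with hc | hc
      · obtain ⟨e1, e2⟩ := (huv i).1 hc
        rw [e1, e2]
        refine ⟨⟨hu1, hua, ?_, hc⟩, hiu, inv_mul _ _ hiu hiv⟩
        nlinarith
      · obtain ⟨e1, e2⟩ := (huv i).2 hc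
        rw [e1, e2]
        refine ⟨⟨?_, ?_, hv1, hva⟩, inv_diva _ (inv_mul _ _ hiu hiv), hiv⟩
        · rw [le_div_iff₀ ha0, one_mul]; exact hc
        · rw [div_lt_iff₀ ha0]; nlinarith
  have hu_gt1 : ∀ i, 1 < u i := by
    intro i
    refine lt_of_le_of_ne (good i).1.1 (fun h => ?_)
    exact inv_ne _ (good i).2.1 0 (by rw [← h]; norm_num)
  have hu_pos : ∀ i, 0 < u i := fun i => lt_trans one_pos (hu_gt1 i)
  have hv_pos : ∀ i, 0 < v i := fun i => lt_of_lt_of_le one_pos (good i).1.2.2.1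
  -- monotonicity
  have hu_anti : Antitone u := by
    apply antitone_nat_of_succ_le
    intro i
    rcases lt_or_ge (u i * v i) (a:ℝ) with hc | hc
    · rw [((huv i).1 hc).1]
    · rw [((huv i).2 hc).1, div_le_iff₀ ha0]
      have := (good i).1.2.2.2
      nlinarith [hu_pos i]
  have hv_mono : Monotone v := by
    apply monotone_nat_of_le_succ
    intro i
    rcases lt_or_ge (u i * v i) (a:ℝ) with hc | hc
    · rw [((huv i).1 hc).2]
      nlinarith [(good i).1.1, hv_pos i]
    · rw [((huv i).2 hc).2]
  -- limits
  have hbddu : BddBelow (Set.range u) := ⟨1, by rintro _ ⟨i, rfl⟩; exact (good i).1.1⟩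
  have hbddv : BddAbove (Set.range v) := ⟨a, by rintro _ ⟨i, rfl⟩; exact le_of_lt (good i).1.2.2.2⟩
  set L := ⨅ i, u i with hL
  set M := ⨆ i, v i with hM
  have hu_tend : Tendsto u atTop (nhds L) := tendsto_atTop_ciInf hu_anti hbddu
  have hv_tend : Tendsto v atTop (nhds M) := tendsto_atTop_ciSup hv_mono hbddv
  have hLle : ∀ i, L ≤ u i := fun i => ciInf_le hbddu i
  have hL1 : 1 ≤ L := le_ciInf fun i => (good i).1.1
  have hMle : ∀ i, v i ≤ M := fun i => le_ciSup hbddv i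
  have hMa : M ≤ a := ciSup_le fun i => le_of_lt (good i).1.2.2.2
  have hM1 : 1 < M := lt_of_lt_of_le (by rw [hv0]; exact hφ1_gt) (hMle 0)
  have hM0 : 0 < M := lt_trans one_pos hM1
  -- case 1 happens beyond any N
  have key1 : ∀ N, ∃ i, N ≤ i ∧ u i * v i < a := by
    intro N
    by_contra h
    push_neg at h
    have hstep : ∀ k, u (N + k) = u N * (v N / a) ^ k ∧ v (N + k) = v N := by
      intro k
      induction k with
      | zero => simp
      | succ k ih =>
        obtain ⟨e1, e2⟩ := (huv (N + k)).2 (h _ (Nat.le_add_right N k))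
        have : N + (k + 1) = (N + k) + 1 := by ring
        rw [this, e1, e2, ih.1, ih.2]
        constructor
        · ring
        · rfl
    have hr1 : v N / a < 1 := by
      rw [div_lt_one ha0]; exact (good N).1.2.2.2
    have hr0 : 0 ≤ v N / a := le_of_lt (div_pos (hv_pos N) ha0)
    obtain ⟨k, hk⟩ := exists_pow_lt_of_lt_one (show (0:ℝ) < 1 / u N by have := hu_pos N; positivity) hr1
    have h1 : u (N + k) = u N * (v N / a) ^ k := (hstep k).1
    have h2 : 1 ≤ u (N + k) := (good (N + k)).1.1
    rw [h1] at h2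
    have : u N * (v N / a) ^ k < u N * (1 / u N) := by
      apply mul_lt_mul_of_pos_left hk (hu_pos N)
    rw [mul_one_div, div_self (ne_of_gt (hu_pos N))] at this
    linarith
  -- case 2 happens beyond any N
  have key2 : ∀ N, ∃ i, N ≤ i ∧ (a:ℝ) ≤ u i * v i := by
    intro N
    by_contra h
    push_neg at h
    have hstep : ∀ k, u (N + k) = u N ∧ v (N + k) = v N * (u N) ^ k := by
      intro k
      induction k with
      | zero => simp
      | succ k ih =>
        obtain ⟨e1, e2⟩ := (huv (N + k)).1 (h _ (Nat.le_add_right N k))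
        have heq : N + (k + 1) = (N + k) + 1 := by ring
        rw [heq, e1, e2, ih.1, ih.2]
        exact ⟨rfl, by ring⟩
    obtain ⟨k, hk⟩ := pow_unbounded_of_one_lt ((a:ℝ) / v N) (hu_gt1 N)
    have h2 : v (N + k) < a := (good (N + k)).1.2.2.2
    rw [(hstep k).2] at h2
    rw [div_lt_iff₀ (hv_pos N)] at hk
    nlinarith [hv_pos N]
  -- L ≤ 1
  have hLM : ∀ N, L * v N ≤ M := by
    intro N
    obtain ⟨i, hi, hlt⟩ := key1 N
    have e2 := ((huv i).1 hlt).2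
    calc L * v N ≤ u i * v i := by
          apply mul_le_mul (hLle i) (hv_mono hi) (le_of_lt (hv_pos N)) (le_of_lt (hu_pos i))
    _ = v (i + 1) := e2.symm
    _ ≤ M := hMle (i + 1)
  have hLM' : L * M ≤ M := by
    have ht : Tendsto (fun N => L * v N) atTop (nhds (L * M)) := hv_tend.const_mul L
    exact le_of_tendsto ht (Filter.Eventually.of_forall hLM)
  have hLeq : L = 1 := by
    have : L ≤ 1 := by nlinarith
    linarith
  -- M = a
  have haM : ∀ N, (a:ℝ) / M ≤ u N := by
    intro N
    obtain ⟨i, hi, hge⟩ := key2 N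
    have h1 : (a:ℝ) ≤ u i * M := le_trans hge (mul_le_mul_of_nonneg_left (hMle i) (le_of_lt (hu_pos i)))
    have h2 : (a:ℝ) / M ≤ u i := by rw [div_le_iff₀ hM0]; exact h1
    exact le_trans h2 (hu_anti hi)
  have hMeq : M = a := by
    have h1 : (a:ℝ) / M ≤ L := le_ciInf haM
    rw [hLeq] at h1
    rw [div_le_one hM0] at h1
    linarith
  rw [hLeq] at hu_tend
  rw [hMeq] at hv_tend
  exact ⟨hu_tend, hv_tend⟩
end

section
/- The set F is dense in the closed interval [1, a] of real numbers; that is, the closure of F in ℝ equals the set of real numbers x with 1 ≤ x ≤ a. -/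
open Real Set

lemma aux_step_cover {δ y : ℝ} (hδ0 : 0 < δ) (hδ : δ ≤ 1/2) (hy0 : 0 ≤ y) (hy1 : y ≤ 1) :
    ∃ k : ℕ, 1 ≤ k ∧ (k : ℝ) * δ < 1 ∧ |(k : ℝ) * δ - y| ≤ δ := by
  by_cases h : y < δ
  · have h1 : ((1:ℕ) : ℝ) * δ = δ := by norm_num
    refine ⟨1, le_refl 1, by rw [h1]; linarith, ?_⟩
    rw [h1, abs_le]; constructor <;> linarith
  · push_neg at h
    set k := Nat.floor (y / δ) with hk
    have hdiv0 : 0 ≤ y / δ := div_nonneg hy0 hδ0.le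
    have hk1 : 1 ≤ k := Nat.le_floor ((le_div_iff₀ hδ0).2 (by push_cast; linarith))
    have hkle : (k : ℝ) * δ ≤ y := by
      have := Nat.floor_le hdiv0
      calc (k : ℝ) * δ ≤ (y / δ) * δ := by nlinarith
        _ = y := div_mul_cancel₀ _ hδ0.ne'
    have hklt : y < ((k : ℝ) + 1) * δ := by
      have := Nat.lt_floor_add_one (y / δ)
      calc y = (y / δ) * δ := (div_mul_cancel₀ _ hδ0.ne').symm
        _ < ((k : ℝ) + 1) * δ := by nlinarith
    by_cases hlt : (k : ℝ) * δ < 1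
    · exact ⟨k, hk1, hlt, by rw [abs_le]; constructor <;> nlinarith⟩
    · push_neg at hlt
      have heq : (k : ℝ) * δ = 1 := le_antisymm (hkle.trans hy1) hlt
      have hy : y = 1 := le_antisymm hy1 (heq ▸ hkle)
      have hk2 : 2 ≤ k := by
        have hkr : (2:ℝ) ≤ (k:ℝ) := by nlinarith [Nat.cast_nonneg (α := ℝ) k]
        exact_mod_cast hkr
      refine ⟨k - 1, by omega, ?_, ?_⟩
      · have : ((k - 1 : ℕ) : ℝ) = (k : ℝ) - 1 := by
          push_cast [Nat.cast_sub (by omega : 1 ≤ k)]; ring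
        rw [this]; nlinarith
      · have : ((k - 1 : ℕ) : ℝ) = (k : ℝ) - 1 := by
          push_cast [Nat.cast_sub (by omega : 1 ≤ k)]; ring
        rw [this, hy]; rw [abs_le]; constructor <;> nlinarith
lemma aux_fract_dense {θ : ℝ} (hirr : Irrational θ) {y : ℝ} (hy0 : 0 ≤ y) (hy1 : y ≤ 1)
    {ε : ℝ} (hε : 0 < ε) : ∃ p : ℕ, 1 ≤ p ∧ |Int.fract ((p : ℝ) * θ) - y| ≤ ε := by
  set ε' := min ε (1/2) with hε'
  have hε'0 : 0 < ε' := lt_min hε (by norm_num)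
  have hε'h : ε' ≤ 1/2 := min_le_right _ _
  have hε'ε : ε' ≤ ε := min_le_left _ _
  set S := AddSubgroup.closure ({1, θ} : Set ℝ) with hS
  have hdense : Dense (S : Set ℝ) := by
    rcases S.dense_or_cyclic with h | ⟨g, hg⟩
    · exact h
    · exfalso
      have h1 : (1 : ℝ) ∈ S := AddSubgroup.subset_closure (mem_insert _ _)
      have hθ : θ ∈ S := AddSubgroup.subset_closure (mem_insert_of_mem _ rfl)
      rw [hg, AddSubgroup.mem_closure_singleton] at h1 hθ
      obtain ⟨m, hm⟩ := h1
      obtain ⟨n, hn⟩ := hθ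
      rw [zsmul_eq_mul] at hm hn
      have hm0 : m ≠ 0 := by rintro rfl; simp at hm
      have hmr : (m : ℝ) ≠ 0 := Int.cast_ne_zero.2 hm0
      apply hirr
      refine ⟨(n : ℚ) / (m : ℚ), ?_⟩
      push_cast
      rw [div_eq_iff hmr]
      have hg' : g = 1 / m := by field_simp at hm ⊢; linarith [hm]
      rw [← hn, hg']; field_simp
  -- find g ∈ S ∩ Ioo 0 ε'
  obtain ⟨g, hgS, hg⟩ := hdense.exists_mem_open (isOpen_Ioo (a := (0:ℝ)) (b := ε'))
    ⟨ε'/2, by constructor <;> linarith⟩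
  obtain ⟨hg0, hg1⟩ : 0 < g ∧ g < ε' := hg
  have hglt : g < 1 := lt_of_lt_of_le hg1 (by linarith)
  rw [SetLike.mem_coe, hS, AddSubgroup.mem_closure_pair] at hgS
  obtain ⟨m, n, hmn⟩ := hgS
  rw [zsmul_eq_mul, zsmul_eq_mul, mul_one] at hmn
  have hn0 : n ≠ 0 := by
    rintro rfl
    rw [Int.cast_zero, zero_mul, add_zero] at hmn
    have : (1 : ℝ) ≤ m := by exact_mod_cast (by exact_mod_cast hg0.trans_eq hmn.symm : (0:ℤ) < m)
    linarith
  have hfg : Int.fract g = g := Int.fract_eq_self.2 ⟨hg0.le, hglt⟩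
  -- produce N with fract (N θ) = g or 1 - g
  obtain ⟨N, hN1, hNf⟩ : ∃ N : ℕ, 1 ≤ N ∧
      (Int.fract ((N : ℝ) * θ) = g ∨ Int.fract ((N : ℝ) * θ) = 1 - g) := by
    rcases lt_or_gt_of_ne hn0 with hneg | hpos
    · refine ⟨(-n).toNat, by omega, Or.inr ?_⟩
      have hcast : (((-n).toNat : ℕ) : ℝ) = -(n : ℝ) := by
        exact_mod_cast congrArg (fun z : ℤ => (z : ℝ)) (Int.toNat_of_nonneg (by omega : (0:ℤ) ≤ -n))
      have : ((-n).toNat : ℝ) * θ = (m : ℝ) + (-g) := by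
        rw [hcast]; linarith [hmn]
      rw [this, Int.fract_intCast_add, Int.fract_neg (by rw [hfg]; exact hg0.ne'), hfg]
    · refine ⟨n.toNat, by omega, Or.inl ?_⟩
      have hcast : ((n.toNat : ℕ) : ℝ) = (n : ℝ) := by
        exact_mod_cast congrArg (fun z : ℤ => (z : ℝ)) (Int.toNat_of_nonneg (by omega : (0:ℤ) ≤ n))
      have : (n.toNat : ℝ) * θ = g - (m : ℝ) := by
        rw [hcast]; linarith [hmn]
      rw [this, Int.fract_sub_intCast, hfg]
  -- fract of multiples
  have hmul : ∀ k : ℕ, Int.fract ((k * N : ℕ) * θ) = Int.fract ((k : ℝ) * Int.fract ((N : ℝ) * θ)) := by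
    intro k
    rw [Int.fract_eq_fract]
    refine ⟨k * ⌊(N : ℝ) * θ⌋, ?_⟩
    have hf : (N : ℝ) * θ - Int.fract ((N : ℝ) * θ) = ⌊(N : ℝ) * θ⌋ := Int.self_sub_fract _
    push_cast
    linear_combination (k : ℝ) * hf
  set δ := g with hδdef
  rcases hNf with hA | hB
  · obtain ⟨k, hk1, hklt, hkabs⟩ := aux_step_cover hg0 (le_of_lt (lt_of_lt_of_le hg1 hε'h)) hy0 hy1
    refine ⟨k * N, Nat.one_le_iff_ne_zero.2 (by positivity), ?_⟩
    rw [hmul k, hA, Int.fract_eq_self.2 ⟨by positivity, hklt⟩]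
    linarith [hkabs]
  · obtain ⟨k, hk1, hklt, hkabs⟩ := aux_step_cover hg0 (le_of_lt (lt_of_lt_of_le hg1 hε'h))
      (by linarith : (0:ℝ) ≤ 1 - y) (by linarith : (1:ℝ) - y ≤ 1)
    refine ⟨k * N, Nat.one_le_iff_ne_zero.2 (by positivity), ?_⟩
    have hkδ0 : 0 < (k : ℝ) * δ := by
      have : (1:ℝ) ≤ (k:ℝ) := by exact_mod_cast hk1
      nlinarith
    have : (k : ℝ) * Int.fract ((N : ℝ) * θ) = (k : ℤ) + (-(k * δ)) := by
      rw [hB]; push_cast; ring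
    rw [hmul k, this, Int.fract_intCast_add,
      Int.fract_neg (by rw [Int.fract_eq_self.2 ⟨hkδ0.le, hklt⟩]; exact hkδ0.ne'),
      Int.fract_eq_self.2 ⟨hkδ0.le, hklt⟩]
    rw [abs_le] at hkabs ⊢
    constructor <;> linarith [hkabs.1, hkabs.2, hε'ε]

lemma aux_logb_irrational {a b : ℕ} (ha : 1 < a) (hab : a < b) (hcop : Nat.Coprime a b) :
    Irrational (Real.logb a b) := by
  have ha0 : (0:ℝ) < a := by positivity
  have ha1 : (1:ℝ) < a := by exact_mod_cast ha
  have hb0 : (0:ℝ) < b := by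
    have : 0 < b := by omega
    exact_mod_cast this
  have habr : (a:ℝ) < b := by exact_mod_cast hab
  have hθ1 : 1 < Real.logb a b := by
    rw [show (1:ℝ) = Real.logb a a from (Real.logb_self_eq_one ha1).symm]
    exact (Real.logb_lt_logb_iff ha1 ha0 hb0).2 habr
  rintro ⟨q, hq⟩
  have hq1 : 1 < q := by
    have : (1:ℝ) < (q:ℝ) := hq ▸ hθ1
    exact_mod_cast this
  have hden : (0:ℝ) < (q.den : ℝ) := by exact_mod_cast q.pos
  have hnum : 0 < q.num := by
    have := Rat.num_pos.2 (lt_trans zero_lt_one hq1)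
    exact this
  set m := q.num.toNat with hm
  have hm0 : m ≠ 0 := by omega
  have hmr : ((m : ℕ) : ℝ) = (q.num : ℝ) := by
    exact_mod_cast congrArg (fun z : ℤ => (z : ℝ)) (Int.toNat_of_nonneg hnum.le)
  -- b = a ^ θ
  have hba : (b:ℝ) = (a:ℝ) ^ ((q:ℝ)) := by
    rw [hq]
    exact (Real.rpow_logb ha0 (ne_of_gt ha1) hb0).symm
  have key : (b:ℝ) ^ (q.den : ℕ) = (a:ℝ) ^ (m : ℕ) := by
    rw [hba, ← Real.rpow_natCast ((a:ℝ) ^ (q:ℝ)) q.den, ← Real.rpow_mul ha0.le]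
    rw [← Real.rpow_natCast (a:ℝ) m, hmr]
    congr 1
    rw [Rat.cast_def]
    field_simp
  have keyn : b ^ q.den = a ^ m := by
    have : ((b ^ q.den : ℕ) : ℝ) = ((a ^ m : ℕ) : ℝ) := by push_cast; exact key
    exact_mod_cast this
  have hc : Nat.Coprime (a ^ m) (b ^ q.den) := Nat.Coprime.pow m q.den hcop
  rw [← keyn] at hc
  have h1 : b ^ q.den = 1 := by rwa [Nat.Coprime, Nat.gcd_self] at hc
  have h2 : b ≤ b ^ q.den := Nat.le_self_pow q.den_nz b
  omega

theorem stmt_18 (a b : ℕ) (ha : 1 < a) (hab : a < b) (hcop : Nat.Coprime a b)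
    (d : ℕ → ℕ) (hd : ∀ p : ℕ, IsLeast {k : ℕ | b ^ p ≤ a ^ (p + k)} (d p))
    (φ : ℕ → ℝ) (hφ : ∀ p : ℕ, φ p = (a : ℝ) ^ (p + d p) / (b : ℝ) ^ p)
    (F : Set ℝ) (hF : F = Set.range φ) :
    closure F = Set.Icc (1 : ℝ) (a : ℝ) := by
  have ha0 : (0:ℝ) < a := by positivity
  have ha1 : (1:ℝ) < a := by exact_mod_cast ha
  have hane : (a:ℝ) ≠ 1 := ne_of_gt ha1
  have hb0n : 0 < b := by omega
  have hb0 : (0:ℝ) < b := by exact_mod_cast hb0n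
  set θ := Real.logb a b with hθ
  have hirr : Irrational θ := aux_logb_irrational ha hab hcop
  have hθ1 : 1 < θ := by
    rw [hθ, show (1:ℝ) = Real.logb a a from (Real.logb_self_eq_one ha1).symm]
    exact (Real.logb_lt_logb_iff ha1 ha0 hb0).2 (by exact_mod_cast hab)
  have hbrpow : (b:ℝ) = (a:ℝ) ^ θ := (Real.rpow_logb ha0 hane hb0).symm
  have hiff : ∀ p m : ℕ, 1 ≤ p → (b ^ p ≤ a ^ m ↔ (⌊(p:ℝ) * θ⌋ : ℝ) + 1 ≤ (m:ℝ)) := by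
    intro p m hp
    have hx : Irrational ((p:ℝ) * θ) := hirr.natCast_mul (by omega)
    have hcast : (b ^ p ≤ a ^ m) ↔ ((b:ℝ) ^ p ≤ (a:ℝ) ^ m) := by
      rw [← Nat.cast_le (α := ℝ)]; push_cast; rfl
    rw [hcast, hbrpow, ← Real.rpow_natCast ((a:ℝ) ^ θ) p, ← Real.rpow_mul ha0.le,
      ← Real.rpow_natCast (a:ℝ) m, Real.rpow_le_rpow_left_iff ha1]
    constructor
    · intro h
      have hle : (p:ℝ) * θ ≤ (m:ℝ) := by linarith [mul_comm θ (p:ℝ)]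
      have hne : (p:ℝ) * θ ≠ (m:ℝ) := hx.ne_nat m
      have hlt : (p:ℝ) * θ < (m:ℝ) := lt_of_le_of_ne hle hne
      have : ⌊(p:ℝ) * θ⌋ < (m:ℤ) := Int.floor_lt.2 (by exact_mod_cast hlt)
      have : ⌊(p:ℝ) * θ⌋ + 1 ≤ (m:ℤ) := this
      exact_mod_cast this
    · intro h
      have : (p:ℝ) * θ < (⌊(p:ℝ) * θ⌋ : ℝ) + 1 := Int.lt_floor_add_one _
      linarith [mul_comm θ (p:ℝ)]
  -- value of d p
  have hkey : ∀ p : ℕ, 1 ≤ p → ((p + d p : ℕ) : ℝ) = (⌊(p:ℝ) * θ⌋ : ℝ) + 1 := by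
    intro p hp
    have hple : (p : ℤ) ≤ ⌊(p:ℝ) * θ⌋ := by
      apply Int.le_floor.2
      push_cast
      nlinarith [(Nat.one_le_cast (α := ℝ)).2 hp]
    set L := ⌊(p:ℝ) * θ⌋.toNat with hL
    have hLz : (L : ℤ) = ⌊(p:ℝ) * θ⌋ := Int.toNat_of_nonneg (by omega)
    have hLr : (L : ℝ) = (⌊(p:ℝ) * θ⌋ : ℝ) := by exact_mod_cast congrArg (fun z : ℤ => (z : ℝ)) hLz
    have hpL : p ≤ L := by
      have : (p : ℤ) ≤ (L : ℤ) := by omega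
      exact_mod_cast this
    have hDleast : IsLeast {k : ℕ | b ^ p ≤ a ^ (p + k)} (L + 1 - p) := by
      constructor
      · rw [Set.mem_setOf_eq, hiff p _ hp, ← hLr]
        push_cast
        have : p + (L + 1 - p) = L + 1 := by omega
        rw [show ((p:ℝ) + ((L + 1 - p : ℕ) : ℝ)) = ((p + (L + 1 - p) : ℕ) : ℝ) by push_cast; ring,
          this]
        push_cast
        linarith
      · intro k hk
        rw [Set.mem_setOf_eq, hiff p _ hp, ← hLr] at hk
        have : (L : ℝ) + 1 ≤ ((p + k : ℕ) : ℝ) := by push_cast at hk ⊢; linarith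
        have : L + 1 ≤ p + k := by exact_mod_cast this
        omega
    have hdp : d p = L + 1 - p := (hd p).unique hDleast
    rw [hdp, ← hLr]
    push_cast [show p + (L + 1 - p) = L + 1 by omega]
    ring
  -- rpow formula for φ
  have hφp : ∀ p : ℕ, 1 ≤ p → φ p = (a:ℝ) ^ (1 - Int.fract ((p:ℝ) * θ)) := by
    intro p hp
    rw [hφ p, hbrpow, ← Real.rpow_natCast ((a:ℝ) ^ θ) p, ← Real.rpow_mul ha0.le,
      ← Real.rpow_natCast (a:ℝ) (p + d p), ← Real.rpow_sub ha0]
    congr 1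
    rw [hkey p hp]
    have hc := Int.self_sub_fract ((p:ℝ) * θ)
    have hm := mul_comm θ (p:ℝ)
    linarith
  -- F ⊆ Icc 1 a
  have hFsub : F ⊆ Set.Icc (1:ℝ) a := by
    rw [hF]
    rintro x ⟨p, rfl⟩
    constructor
    · rw [hφ p, le_div_iff₀ (by positivity), one_mul]
      exact_mod_cast (hd p).1
    · rcases Nat.eq_zero_or_pos (d p) with h0 | hpos
      · rw [hφ p, h0, add_zero, div_le_iff₀ (by positivity)]
        have h1 : (a:ℝ) ^ p ≤ (b:ℝ) ^ p :=
          pow_le_pow_left₀ ha0.le (by exact_mod_cast hab.le) p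
        nlinarith [pow_pos hb0 p]
      · have hnot : ¬ b ^ p ≤ a ^ (p + (d p - 1)) := by
          intro hmem
          have := (hd p).2 hmem
          omega
        push_neg at hnot
        have hlt : ((a:ℝ)) ^ (p + (d p - 1)) < (b:ℝ) ^ p := by exact_mod_cast hnot
        rw [hφ p, div_le_iff₀ (by positivity)]
        have hexp : p + d p = (p + (d p - 1)) + 1 := by omega
        rw [hexp, pow_succ]
        nlinarith [pow_pos ha0 (p + (d p - 1))]
  apply Set.Subset.antisymm
  · exact closure_minimal hFsub isClosed_Icc
  · intro x hx
    obtain ⟨hx1, hxa⟩ := hx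
    have hx0 : (0:ℝ) < x := lt_of_lt_of_le zero_lt_one hx1
    set t := Real.logb a x with ht
    have ht0 : 0 ≤ t := Real.logb_nonneg ha1 hx1
    have ht1 : t ≤ 1 := (Real.logb_le_iff_le_rpow ha1 hx0).2 (by rw [Real.rpow_one]; exact hxa)
    have hy0 : (0:ℝ) ≤ 1 - t := by linarith
    have hy1 : 1 - t ≤ 1 := by linarith
    have hch : ∀ j : ℕ, ∃ p : ℕ, 1 ≤ p ∧
        |Int.fract ((p:ℝ) * θ) - (1 - t)| ≤ 1 / ((j:ℝ) + 1) :=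
      fun j => aux_fract_dense hirr hy0 hy1 (by positivity)
    choose P hP1 hP2 using hch
    have htend : Filter.Tendsto (fun j => Int.fract ((P j : ℝ) * θ)) Filter.atTop
        (nhds (1 - t)) := by
      rw [tendsto_iff_dist_tendsto_zero]
      apply squeeze_zero (fun j => dist_nonneg) (fun j => ?_)
        tendsto_one_div_add_atTop_nhds_zero_nat
      rw [Real.dist_eq]
      exact hP2 j
    have htend2 : Filter.Tendsto (fun j => φ (P j)) Filter.atTop (nhds x) := by
      have h1 : Filter.Tendsto (fun j => (a:ℝ) ^ (1 - Int.fract ((P j : ℝ) * θ)))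
          Filter.atTop (nhds ((a:ℝ) ^ t)) := by
        have h2 := Filter.Tendsto.rpow (tendsto_const_nhds (x := (a:ℝ)))
          ((tendsto_const_nhds (x := (1:ℝ))).sub htend) (Or.inl (ne_of_gt ha0))
        simpa using h2
      have hx' : (a:ℝ) ^ t = x := Real.rpow_logb ha0 hane hx0
      rw [← hx']
      exact h1.congr (fun j => (hφp (P j) (hP1 j)).symm)
    exact mem_closure_of_tendsto htend2
      (Filter.Eventually.of_forall (fun j => by rw [hF]; exact ⟨P j, rfl⟩))
end

section
/- The closure in ℝ of the set ⋃_{k ∈ ℕ} {a^k · f : f ∈ F} equals the set of real numbers x with 1 ≤ x, and the closure in ℝ of the set ⋃_{k ∈ ℤ} {a^k · f : f ∈ F} contains every positive real number (so this union is dense in the nonnegative reals). -/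
open Real

/-- no power relation between coprime a and b -/
lemma no_pow_rel {a b : ℕ} (ha : 1 < a) (hab : a < b) (hcop : Nat.Coprime a b)
    {j m : ℕ} (hj : 0 < j) : b ^ j ≠ a ^ m := by
  intro h
  have hb : 1 < b := ha.trans hab
  have hm : 0 < m := by
    rcases Nat.eq_zero_or_pos m with hm | hm
    · exfalso; subst hm
      simp only [pow_zero] at h
      exact (Nat.one_lt_pow hj.ne' hb).ne' h
    · exact hm
  have hp : a.minFac.Prime := Nat.minFac_prime (by omega)
  have h1 : a.minFac ∣ b ^ j := by
    rw [h]; exact dvd_pow (Nat.minFac_dvd a) hm.ne'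
  have h2 : a.minFac ∣ b := hp.dvd_of_dvd_pow h1
  have h3 : a.minFac ∣ Nat.gcd a b := Nat.dvd_gcd (Nat.minFac_dvd a) h2
  rw [hcop] at h3
  exact hp.one_lt.ne' (Nat.eq_one_of_dvd_one h3)

set_option maxHeartbeats 2000000 in
theorem stmt_19 (a b : ℕ) (ha : 1 < a) (hab : a < b) (hcop : Nat.Coprime a b)
    (d : ℕ → ℕ) (hd : ∀ p : ℕ, IsLeast {k : ℕ | b ^ p ≤ a ^ (p + k)} (d p))
    (φ : ℕ → ℝ) (hφ : ∀ p : ℕ, φ p = (a : ℝ) ^ (p + d p) / (b : ℝ) ^ p)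
    (F : Set ℝ) (hF : F = Set.range φ) :
    closure (⋃ k : ℕ, (fun f : ℝ => (a : ℝ) ^ k * f) '' F) = Set.Ici (1 : ℝ) ∧
    ∀ x : ℝ, 0 < x →
      x ∈ closure (⋃ k : ℤ, (fun f : ℝ => (a : ℝ) ^ k * f) '' F) := by
  have hb : 1 < b := ha.trans hab
  have ha0 : (0:ℝ) < a := by positivity
  have hb0 : (0:ℝ) < b := by positivity
  have ha1 : (1:ℝ) < a := by exact_mod_cast ha
  have hb1 : (1:ℝ) < b := by exact_mod_cast hb
  have hab' : (a:ℝ) < b := by exact_mod_cast hab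
  set α := Real.log a with hα_def
  set β := Real.log b with hβ_def
  have hα : 0 < α := Real.log_pos ha1
  have hβα : α < β := Real.log_lt_log ha0 hab'
  set θ := β / α with hθ_def
  have hθ1 : 1 < θ := (one_lt_div hα).mpr hβα
  have hθα : θ * α = β := div_mul_cancel₀ _ hα.ne'
  -- irrationality in the needed form
  have hirr : ∀ (j : ℕ) (M : ℤ), 0 < j → (j:ℝ) * θ ≠ (M:ℝ) := by
    intro j M hj h
    have hMpos : (0:ℝ) < (M:ℝ) := by
      rw [← h]
      have : (0:ℝ) < (j:ℝ) := by exact_mod_cast hj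
      nlinarith
    have hM0 : 0 < M := by exact_mod_cast hMpos
    have h2 : (j:ℝ) * β = (M:ℝ) * α := by
      calc (j:ℝ) * β = (j:ℝ) * θ * α := by rw [mul_assoc, hθα]
        _ = (M:ℝ) * α := by rw [h]
    have h3 : Real.log ((b:ℝ) ^ j) = Real.log ((a:ℝ) ^ M.toNat) := by
      rw [Real.log_pow, Real.log_pow, ← hβ_def, ← hα_def]
      have hM : ((M.toNat : ℕ) : ℝ) = (M:ℝ) := by exact_mod_cast Int.toNat_of_nonneg hM0.le
      rw [hM]; exact h2
    have h4 : ((b:ℝ) ^ j) = ((a:ℝ) ^ M.toNat) :=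
      Real.log_injOn_pos (Set.mem_Ioi.mpr (by positivity))
        (Set.mem_Ioi.mpr (by positivity)) h3
    have h5 : b ^ j = a ^ M.toNat := by exact_mod_cast h4
    exact no_pow_rel ha hab hcop hj h5
  -- lower bound
  have hd1 : ∀ p : ℕ, (p:ℝ) * θ ≤ ((p + d p : ℕ) : ℝ) := by
    intro p
    have h1 : (b:ℝ) ^ p ≤ (a:ℝ) ^ (p + d p) := by exact_mod_cast (hd p).1
    have h2 : Real.log ((b:ℝ)^p) ≤ Real.log ((a:ℝ)^(p + d p)) :=
      Real.log_le_log (by positivity) h1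
    rw [Real.log_pow, Real.log_pow, ← hβ_def, ← hα_def] at h2
    have : (p:ℝ) * θ = (p:ℝ) * β / α := by rw [hθ_def]; ring
    rw [this, div_le_iff₀ hα]
    exact h2
  -- upper bound
  have hd2 : ∀ p : ℕ, ((p + d p : ℕ) : ℝ) < (p:ℝ) * θ + 1 := by
    intro p
    rcases Nat.eq_zero_or_pos p with hp | hp
    · subst hp
      have : d 0 = 0 := by
        have := (hd 0).2 (show 0 ∈ {k | b ^ 0 ≤ a ^ (0 + k)} by simp)
        omega
      simp [this]
    · have hdp : 1 ≤ d p := by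
        by_contra hcon
        have hdp0 : d p = 0 := by omega
        have h1 : b ^ p ≤ a ^ p := by
          have h := (hd p).1
          simp only [Set.mem_setOf_eq, hdp0, Nat.add_zero] at h
          exact h
        have h2 : a ^ p < b ^ p := Nat.pow_lt_pow_left hab hp.ne'
        omega
      have hnot : ¬ b ^ p ≤ a ^ (p + (d p - 1)) := by
        intro hcon
        have := (hd p).2 hcon
        omega
      have h1 : a ^ (p + (d p - 1)) < b ^ p := by omega
      have h1' : (a:ℝ) ^ (p + (d p - 1)) < (b:ℝ) ^ p := by exact_mod_cast h1
      have h2 : Real.log ((a:ℝ) ^ (p + (d p - 1))) < Real.log ((b:ℝ)^p) :=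
        Real.log_lt_log (by positivity) h1'
      rw [Real.log_pow, Real.log_pow, ← hβ_def, ← hα_def] at h2
      have hcast : ((p + (d p - 1) : ℕ) : ℝ) = ((p + d p : ℕ) : ℝ) - 1 := by
        push_cast [Nat.cast_sub hdp]; ring
      rw [hcast] at h2
      have h3 : ((p + d p : ℕ) : ℝ) - 1 < (p:ℝ) * θ := by
        have : (p:ℝ) * θ = (p:ℝ) * β / α := by rw [hθ_def]; ring
        rw [this, lt_div_iff₀ hα]
        exact h2
      linarith
  -- uniqueness of integer in [pθ, pθ+1)
  have huniq : ∀ (p : ℕ) (M : ℤ), (p:ℝ) * θ ≤ (M:ℝ) → (M:ℝ) < (p:ℝ) * θ + 1 →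
      (M:ℝ) = ((p + d p : ℕ) : ℝ) := by
    intro p M h1 h2
    have l1 := hd1 p
    have l2 := hd2 p
    have habs : |(M:ℝ) - ((p + d p : ℕ) : ℝ)| < 1 := by
      rw [abs_lt]; constructor <;> linarith
    have : ((M - (p + d p : ℕ) : ℤ) : ℝ) = (M:ℝ) - ((p + d p : ℕ) : ℝ) := by push_cast; ring
    rw [← this] at habs
    have h0 : M - (p + d p : ℕ) = 0 := by
      have h := habs
      rw [← Int.cast_abs] at h
      have h2 : |M - (p + d p : ℕ)| < 1 := by exact_mod_cast h
      rw [abs_lt] at h2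
      omega
    have he : M = (p + d p : ℕ) := by omega
    rw [he]
    push_cast
    ring
  -- key density lemma: values (p + d p) - p*θ are dense in [0,1)
  have key : ∀ t : ℝ, 0 ≤ t → t < 1 → ∀ ε : ℝ, 0 < ε →
      ∃ p : ℕ, |(((p + d p : ℕ)) : ℝ) - (p:ℝ) * θ - t| < ε := by
    intro t ht0 ht1 ε hε
    set n : ℕ := max 1 ⌈1/ε⌉₊ with hn_def
    have hn_pos : 0 < n := lt_of_lt_of_le one_pos (le_max_left _ _)
    have hnε : 1 / ((n:ℝ) + 1) < ε := by
      rw [div_lt_iff₀ (by positivity)]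
      have h1 : 1/ε ≤ (n:ℝ) := le_trans (Nat.le_ceil _) (by exact_mod_cast le_max_right 1 ⌈1/ε⌉₊)
      have h2 : 1 ≤ ε * (n:ℝ) := (div_le_iff₀' hε).mp h1
      nlinarith
    obtain ⟨q, hq_pos, hq_le, hq⟩ := Real.exists_nat_abs_mul_sub_round_le θ hn_pos
    set m : ℤ := round ((q:ℝ) * θ) with hm_def
    set δ : ℝ := (q:ℝ) * θ - m with hδ_def
    have hδ0 : δ ≠ 0 := sub_ne_zero.mpr (hirr q m hq_pos)
    have hδε : |δ| < ε := lt_of_le_of_lt hq hnε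
    have hδhalf : |δ| ≤ 1/2 := by
      rw [hδ_def, hm_def]; exact abs_sub_round _
    have hqθ : (q:ℝ) * θ = (m:ℝ) + δ := by rw [hδ_def]; ring
    rcases lt_or_gt_of_ne hδ0 with hneg | hpos
    · -- δ < 0 case
      set δ' : ℝ := -δ with hδ'_def
      have hδ'pos : 0 < δ' := by rw [hδ'_def]; linarith
      have hδ'ε : δ' < ε := by rw [← abs_of_pos hδ'pos, hδ'_def, abs_neg]; exact hδε
      set j : ℕ := ⌊t / δ'⌋₊ with hj_def
      have hjle : (j:ℝ) * δ' ≤ t := by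
        rw [← le_div_iff₀ hδ'pos]
        exact Nat.floor_le (by positivity)
      have hjgt : t - (j:ℝ) * δ' < δ' := by
        have h := Nat.lt_floor_add_one (t / δ')
        rw [← hj_def, div_lt_iff₀ hδ'pos] at h
        nlinarith
      set p : ℕ := j * q with hp_def
      have hpθ : (p:ℝ) * θ = (j:ℝ) * (m:ℝ) - (j:ℝ) * δ' := by
        rw [hp_def]; push_cast
        rw [mul_assoc, hqθ, hδ'_def]; ring
      have hM := huniq p ((j:ℤ) * m) (by rw [hpθ]; push_cast; nlinarith [mul_nonneg (Nat.cast_nonneg j) hδ'pos.le])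
        (by rw [hpθ]; push_cast
            have : (j:ℝ) * δ' < 1 := lt_of_le_of_lt hjle ht1
            linarith)
      refine ⟨p, ?_⟩
      have hc : (((p + d p : ℕ)) : ℝ) - (p:ℝ) * θ = (j:ℝ) * δ' := by
        rw [← hM, hpθ]; push_cast; ring
      rw [hc, abs_sub_comm, abs_of_nonneg (by linarith)]
      linarith
    · -- δ > 0 case
      set s : ℝ := 1 - t with hs_def
      have hs0 : 0 < s := by rw [hs_def]; linarith
      have hs1 : s ≤ 1 := by rw [hs_def]; linarith
      have hδε' : δ < ε := lt_of_le_of_lt (le_abs_self δ) hδε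
      have hδ1 : δ ≤ 1/2 := le_trans (le_abs_self δ) hδhalf
      -- choose j ≥ 1 with j*δ ≤ 1 and |s - j*δ| < ε
      obtain ⟨j, hj1, hjδ1, hjclose⟩ : ∃ j : ℕ, 1 ≤ j ∧ (j:ℝ) * δ ≤ 1 ∧ |s - (j:ℝ) * δ| < ε := by
        by_cases hcs : s < δ
        · exact ⟨1, le_refl 1, by push_cast; linarith,
            by push_cast; rw [abs_sub_comm, abs_of_nonneg (by linarith)]; linarith⟩
        · push_neg at hcs
          refine ⟨⌊s / δ⌋₊, ?_, ?_, ?_⟩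
          · exact Nat.one_le_iff_ne_zero.mpr (by
              intro h0
              have := Nat.floor_eq_zero.mp h0
              rw [div_lt_one hpos] at this
              linarith)
          · have := Nat.floor_le (show 0 ≤ s / δ by positivity)
            rw [le_div_iff₀ hpos] at this
            linarith
          · have h1 := Nat.floor_le (show 0 ≤ s / δ by positivity)
            rw [le_div_iff₀ hpos] at h1
            have h2 := Nat.lt_floor_add_one (s / δ)
            rw [div_lt_iff₀ hpos] at h2
            rw [abs_of_nonneg (by linarith)]
            linarith
      set p : ℕ := j * q with hp_def
      have hjδpos : 0 < (j:ℝ) * δ := by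
        have : (0:ℝ) < (j:ℝ) := by exact_mod_cast hj1
        positivity
      have hpθ : (p:ℝ) * θ = (j:ℝ) * (m:ℝ) + (j:ℝ) * δ := by
        rw [hp_def]; push_cast
        rw [mul_assoc, hqθ]; ring
      have hM := huniq p ((j:ℤ) * m + 1)
        (by rw [hpθ]; push_cast; linarith)
        (by rw [hpθ]; push_cast; linarith)
      refine ⟨p, ?_⟩
      have hc : (((p + d p : ℕ)) : ℝ) - (p:ℝ) * θ = 1 - (j:ℝ) * δ := by
        rw [← hM, hpθ]; push_cast; ring
      rw [hc]
      have : 1 - (j:ℝ) * δ - t = s - (j:ℝ) * δ := by rw [hs_def]; ring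
      rw [this]
      exact hjclose
    -- positivity and exponential formulas
  have hφpos : ∀ p : ℕ, 0 < φ p := by
    intro p; rw [hφ p]; positivity
  have hlogφ : ∀ p : ℕ, Real.log (φ p) = α * ((((p + d p : ℕ)) : ℝ) - (p:ℝ) * θ) := by
    intro p
    rw [hφ p, Real.log_div (by positivity) (by positivity), Real.log_pow, Real.log_pow,
      ← hα_def, ← hβ_def, ← hθα]
    ring
  have hexpφ : ∀ p : ℕ, Real.exp (α * ((((p + d p : ℕ)) : ℝ) - (p:ℝ) * θ)) = φ p := by
    intro p; rw [← hlogφ p, Real.exp_log (hφpos p)]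
  have hexpkZ : ∀ k : ℤ, Real.exp (α * (k:ℝ)) = (a:ℝ) ^ k := by
    intro k
    have h1 : Real.log ((a:ℝ) ^ k) = α * (k:ℝ) := by rw [Real.log_zpow, ← hα_def]; ring
    rw [← h1, Real.exp_log (zpow_pos ha0 k)]
  have hexpkN : ∀ k : ℕ, Real.exp (α * (k:ℝ)) = (a:ℝ) ^ k := by
    intro k
    have h1 : Real.log ((a:ℝ) ^ k) = α * (k:ℝ) := by rw [Real.log_pow, ← hα_def]; ring
    rw [← h1, Real.exp_log (pow_pos ha0 k)]
  have hφF : ∀ p : ℕ, φ p ∈ F := by intro p; rw [hF]; exact ⟨p, rfl⟩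
  have hmemN : ∀ (k p : ℕ), Real.exp (α * ((k:ℝ) + ((((p + d p : ℕ)) : ℝ) - (p:ℝ) * θ)))
      ∈ ⋃ k : ℕ, (fun f : ℝ => (a : ℝ) ^ k * f) '' F := by
    intro k p
    refine Set.mem_iUnion.2 ⟨k, ⟨φ p, hφF p, ?_⟩⟩
    show (a:ℝ) ^ k * φ p = _
    rw [mul_add, Real.exp_add, hexpkN k, hexpφ p]
  have hmemZ : ∀ (k : ℤ) (p : ℕ), Real.exp (α * ((k:ℝ) + ((((p + d p : ℕ)) : ℝ) - (p:ℝ) * θ)))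
      ∈ ⋃ k : ℤ, (fun f : ℝ => (a : ℝ) ^ k * f) '' F := by
    intro k p
    refine Set.mem_iUnion.2 ⟨k, ⟨φ p, hφF p, ?_⟩⟩
    show (a:ℝ) ^ k * φ p = _
    rw [mul_add, Real.exp_add, hexpkZ k, hexpφ p]
  have happrox : ∀ u : ℝ, ∀ ε : ℝ, 0 < ε → ∃ p : ℕ,
      |(⌊u⌋ : ℝ) + ((((p + d p : ℕ)) : ℝ) - (p:ℝ) * θ) - u| < ε := by
    intro u ε hε
    obtain ⟨p, hp⟩ := key (Int.fract u) (Int.fract_nonneg u) (Int.fract_lt_one u) ε hε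
    refine ⟨p, ?_⟩
    have heq : (⌊u⌋ : ℝ) + ((((p + d p : ℕ)) : ℝ) - (p:ℝ) * θ) - u
        = (((p + d p : ℕ)) : ℝ) - (p:ℝ) * θ - Int.fract u := by
      rw [Int.fract]; ring
    rw [heq]; exact hp
  have hcont : Continuous (fun v : ℝ => Real.exp (α * v)) := by continuity
  constructor
  · apply subset_antisymm
    · apply closure_minimal _ isClosed_Ici
      rintro x hx
      simp only [Set.mem_iUnion, Set.mem_image] at hx
      obtain ⟨k, f, hfF, rfl⟩ := hx
      rw [hF] at hfF; obtain ⟨p, rfl⟩ := hfF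
      have h1 : (1:ℝ) ≤ φ p := by
        rw [hφ p, le_div_iff₀ (by positivity)]
        have h2 : (b:ℝ)^p ≤ (a:ℝ)^(p + d p) := by exact_mod_cast (hd p).1
        linarith
      have h2 : (1:ℝ) ≤ (a:ℝ)^k := one_le_pow₀ ha1.le
      exact Set.mem_Ici.mpr (by nlinarith)
    · intro x hx
      have hx1 : (1:ℝ) ≤ x := hx
      have hx0 : (0:ℝ) < x := by linarith
      set u : ℝ := Real.log x / α with hu_def
      have hu0 : 0 ≤ u := div_nonneg (Real.log_nonneg hx1) hα.le
      have hxu : x = Real.exp (α * u) := by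
        rw [hu_def, mul_comm, div_mul_cancel₀ _ hα.ne', Real.exp_log hx0]
      set T : Set ℝ := {v : ℝ | ∃ k p : ℕ, v = (k:ℝ) + ((((p + d p : ℕ)) : ℝ) - (p:ℝ) * θ)}
        with hT_def
      have hTsub : u ∈ closure T := by
        rw [Metric.mem_closure_iff]
        intro ε hε
        obtain ⟨p, hp⟩ := happrox u ε hε
        have hfl : ((⌊u⌋.toNat : ℕ) : ℝ) = ((⌊u⌋ : ℤ) : ℝ) := by
          exact_mod_cast Int.toNat_of_nonneg (Int.floor_nonneg.mpr hu0)
        refine ⟨((⌊u⌋.toNat : ℕ) : ℝ) + ((((p + d p : ℕ)) : ℝ) - (p:ℝ) * θ),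
          ⟨⌊u⌋.toNat, p, rfl⟩, ?_⟩
        rw [Real.dist_eq, hfl, abs_sub_comm]
        exact hp
      have himg : (fun v : ℝ => Real.exp (α * v)) '' T
          ⊆ ⋃ k : ℕ, (fun f : ℝ => (a : ℝ) ^ k * f) '' F := by
        rintro y ⟨v, ⟨k, p, rfl⟩, rfl⟩
        exact hmemN k p
      have hx_mem : x ∈ (fun v : ℝ => Real.exp (α * v)) '' closure T := ⟨u, hTsub, hxu.symm⟩
      exact closure_mono himg (image_closure_subset_closure_image hcont hx_mem)
  · intro x hx0
    set u : ℝ := Real.log x / α with hu_def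
    have hxu : x = Real.exp (α * u) := by
      rw [hu_def, mul_comm, div_mul_cancel₀ _ hα.ne', Real.exp_log hx0]
    set T : Set ℝ := {v : ℝ | ∃ (k : ℤ) (p : ℕ), v = (k:ℝ) + ((((p + d p : ℕ)) : ℝ) - (p:ℝ) * θ)}
      with hT_def
    have hTsub : u ∈ closure T := by
      rw [Metric.mem_closure_iff]
      intro ε hε
      obtain ⟨p, hp⟩ := happrox u ε hε
      refine ⟨((⌊u⌋ : ℤ) : ℝ) + ((((p + d p : ℕ)) : ℝ) - (p:ℝ) * θ),
        ⟨⌊u⌋, p, rfl⟩, ?_⟩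
      rw [Real.dist_eq, abs_sub_comm]
      exact hp
    have himg : (fun v : ℝ => Real.exp (α * v)) '' T
        ⊆ ⋃ k : ℤ, (fun f : ℝ => (a : ℝ) ^ k * f) '' F := by
      rintro y ⟨v, ⟨k, p, rfl⟩, rfl⟩
      exact hmemZ k p
    have hx_mem : x ∈ (fun v : ℝ => Real.exp (α * v)) '' closure T := ⟨u, hTsub, hxu.symm⟩
    exact closure_mono himg (image_closure_subset_closure_image hcont hx_mem)
end
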